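/- arXiv:2311.16721 — 7 statements merged into one kernel-verified Lean document; each statement's English description precedes it below -/
import Mathlib

section
/- Let N ≥ 3. For the complete graph on N nodes (adjacency A j m holds iff j ≠ m), let P denote the number of SIR paths from the configuration in which node 0 is infected and all other nodes are susceptible to the all-recovered configuration. Then (N−1)!·N! < (2N−1)·((N−1)!)² ≤ P and 2^(N−1)·P < (2N−1)!. -/
/-- An SIR transition: either a neighbour infects a susceptible node,
or an infected node recovers. -/
def SIRTrans {N : ℕ} (A : Fin N → Fin N → Prop) (x y : Fin N → Fin 3) : Prop :=
  (∃ m : Fin N, x m = 0 ∧ y m = 1 ∧ (∃ j : Fin N, A j m ∧ x j = 1) ∧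
    ∀ i : Fin N, i ≠ m → y i = x i) ∨
  (∃ m : Fin N, x m = 1 ∧ y m = 2 ∧ ∀ i : Fin N, i ≠ m → y i = x i)

/-- An SIR path from `x` to `y`: a nonempty finite sequence of configurations
starting at `x`, ending at `y`, with consecutive pairs being SIR transitions. -/
def IsSIRPath {N : ℕ} (A : Fin N → Fin N → Prop) (x y : Fin N → Fin 3)
    (L : List (Fin N → Fin 3)) : Prop :=
  L ≠ [] ∧ L.head? = some x ∧ L.getLast? = some y ∧ L.Chain' (SIRTrans A)

/-- The number of SIR paths from `x` to `y`. -/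
noncomputable def numSIRPaths {N : ℕ} (A : Fin N → Fin N → Prop)
    (x y : Fin N → Fin 3) : ℕ :=
  Set.ncard {L : List (Fin N → Fin 3) | IsSIRPath A x y L}

namespace SIR0

/-- An event: set node `e.1` to state `e.2`. -/
abbrev Ev (n : ℕ) := Fin n × Fin 3

variable {n : ℕ}

def apply1 (x : Fin n → Fin 3) (e : Ev n) : Fin n → Fin 3 := Function.update x e.1 e.2

def applyAll (x : Fin n → Fin 3) (w : List (Ev n)) : Fin n → Fin 3 := w.foldl apply1 x

def run (x : Fin n → Fin 3) : List (Ev n) → List (Fin n → Fin 3)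
  | [] => [x]
  | e :: es => x :: run (apply1 x e) es

def ValidStep (x : Fin n → Fin 3) (e : Ev n) : Prop :=
  (e.2 = 1 ∧ x e.1 = 0 ∧ ∃ j, x j = 1) ∨ (e.2 = 2 ∧ x e.1 = 1)

def Valid : (Fin n → Fin 3) → List (Ev n) → Prop
  | _, [] => True
  | x, e :: es => ValidStep x e ∧ Valid (apply1 x e) es

@[simp] lemma valid_nil (x : Fin n → Fin 3) : Valid x ([] : List (Ev n)) := trivial

@[simp] lemma valid_cons {x : Fin n → Fin 3} {e : Ev n} {es : List (Ev n)} :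
    Valid x (e :: es) ↔ ValidStep x e ∧ Valid (apply1 x e) es := Iff.rfl

@[simp] lemma applyAll_nil (x : Fin n → Fin 3) : applyAll x ([] : List (Ev n)) = x := rfl

@[simp] lemma applyAll_cons (x : Fin n → Fin 3) (e : Ev n) (es : List (Ev n)) :
    applyAll x (e :: es) = applyAll (apply1 x e) es := rfl

lemma applyAll_append (x : Fin n → Fin 3) (w₁ w₂ : List (Ev n)) :
    applyAll x (w₁ ++ w₂) = applyAll (applyAll x w₁) w₂ := List.foldl_append ..

lemma valid_append {x : Fin n → Fin 3} {w₁ w₂ : List (Ev n)} :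
    Valid x (w₁ ++ w₂) ↔ Valid x w₁ ∧ Valid (applyAll x w₁) w₂ := by
  induction w₁ generalizing x with
  | nil => simp
  | cons e es ih => simp [ih, and_assoc]

@[simp] lemma run_ne_nil (x : Fin n → Fin 3) (w : List (Ev n)) : run x w ≠ [] := by
  cases w <;> simp [run]

@[simp] lemma run_head? (x : Fin n → Fin 3) (w : List (Ev n)) : (run x w).head? = some x := by
  cases w <;> simp [run]

@[simp] lemma run_getLast? (x : Fin n → Fin 3) (w : List (Ev n)) :
    (run x w).getLast? = some (applyAll x w) := by
  induction w generalizing x with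
  | nil => simp [run]
  | cons e es ih =>
    rw [run, applyAll_cons, ← ih (apply1 x e)]
    cases h : run (apply1 x e) es with
    | nil => exact absurd h (run_ne_nil _ _)
    | cons z zs => simp

lemma validStep_lt {x : Fin n → Fin 3} {e : Ev n} (h : ValidStep x e) : x e.1 < e.2 := by
  rcases h with ⟨h2, h1, -⟩ | ⟨h2, h1⟩ <;> rw [h2, h1] <;> decide

lemma apply1_self {x : Fin n → Fin 3} (e : Ev n) : apply1 x e e.1 = e.2 := by
  simp [apply1]

lemma apply1_other {x : Fin n → Fin 3} {e : Ev n} {i : Fin n} (h : i ≠ e.1) :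
    apply1 x e i = x i := by simp [apply1, Function.update_of_ne h]

lemma le_apply1 {x : Fin n → Fin 3} {e : Ev n} (h : ValidStep x e) (i : Fin n) :
    x i ≤ apply1 x e i := by
  rcases eq_or_ne i e.1 with rfl | hne
  · rw [apply1_self]; exact (validStep_lt h).le
  · rw [apply1_other hne]

lemma le_applyAll {x : Fin n → Fin 3} {w : List (Ev n)} (h : Valid x w) (i : Fin n) :
    x i ≤ applyAll x w i := by
  induction w generalizing x with
  | nil => simp
  | cons e es ih =>
    exact (le_apply1 h.1 i).trans (ih h.2)

/-- A valid word cannot contain an event whose target state is below/at the current one. -/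
lemma not_mem_of_le {x : Fin n → Fin 3} {w : List (Ev n)} (h : Valid x w)
    {e : Ev n} (hle : e.2 ≤ x e.1) : e ∉ w := by
  induction w generalizing x with
  | nil => simp
  | cons f fs ih =>
    intro hmem
    rcases List.mem_cons.mp hmem with rfl | hmem
    · exact absurd (validStep_lt h.1) (not_lt.mpr hle)
    · exact ih h.2 (hle.trans (le_apply1 h.1 e.1)) hmem

lemma nodup_of_valid {x : Fin n → Fin 3} {w : List (Ev n)} (h : Valid x w) : w.Nodup := by
  induction w generalizing x with
  | nil => simp
  | cons e es ih =>
    refine List.nodup_cons.mpr ⟨?_, ih h.2⟩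
    exact not_mem_of_le h.2 (by rw [apply1_self])

lemma snd_mem_of_valid {x : Fin n → Fin 3} {w : List (Ev n)} (h : Valid x w)
    {e : Ev n} (hmem : e ∈ w) : e.2 = 1 ∨ e.2 = 2 := by
  induction w generalizing x with
  | nil => simp at hmem
  | cons f fs ih =>
    rcases List.mem_cons.mp hmem with rfl | hmem
    · rcases h.1 with ⟨h2, -⟩ | ⟨h2, -⟩
      · exact Or.inl h2
      · exact Or.inr h2
    · exact ih h.2 hmem

/-- If the final value differs from the initial one, the event achieving it is in the word. -/
lemma mem_of_changed {x : Fin n → Fin 3} {w : List (Ev n)} (h : Valid x w) (m : Fin n)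
    (hne : applyAll x w m ≠ x m) : (m, applyAll x w m) ∈ w := by
  induction w generalizing x with
  | nil => simp at hne
  | cons e es ih =>
    rw [applyAll_cons] at hne ⊢
    rcases eq_or_ne (applyAll (apply1 x e) es m) (apply1 x e m) with heq | hne2
    · rcases eq_or_ne m e.1 with rfl | hm
      · rw [heq, apply1_self]
        exact List.mem_cons_self
      · exact absurd (heq.trans (apply1_other hm)) hne
    · exact List.mem_cons_of_mem _ (ih h.2 hne2)

/-- An infection of `m` must precede its recovery when starting from a susceptible `m`. -/
lemma infection_mem {x : Fin n → Fin 3} {w : List (Ev n)} (h : Valid x w) (m : Fin n)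
    (hx : x m = 0) (hmem : (m, (2 : Fin 3)) ∈ w) : (m, (1 : Fin 3)) ∈ w := by
  induction w generalizing x with
  | nil => simp at hmem
  | cons e es ih =>
    rcases List.mem_cons.mp hmem with rfl | hmem
    · exfalso
      rcases h.1 with ⟨h2, -⟩ | ⟨-, h1⟩
      · have h2' : (2 : Fin 3) = 1 := h2
        exact absurd h2' (by decide)
      · rw [hx] at h1; exact absurd h1 (by decide)
    · rcases eq_or_ne e (m, (1 : Fin 3)) with rfl | hne
      · exact List.mem_cons_self
      · refine List.mem_cons_of_mem _ (ih h.2 ?_ hmem)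
        rcases eq_or_ne m e.1 with rfl | hm
        · exfalso
          rcases h.1 with ⟨h2, h1, -⟩ | ⟨h2, h1⟩
          · exact hne (Prod.ext_iff.mpr ⟨rfl, h2⟩)
          · rw [hx] at h1; exact absurd h1 (by decide)
        · rw [apply1_other hm, hx]

/-- Correspondence with SIR transitions (complete graph). -/
lemma sirTrans_of_validStep {A : Fin n → Fin n → Prop} (hA : ∀ j m : Fin n, A j m ↔ j ≠ m)
    {x : Fin n → Fin 3} {e : Ev n} (h : ValidStep x e) : SIRTrans A x (apply1 x e) := by
  rcases h with ⟨h2, h1, j, hj⟩ | ⟨h2, h1⟩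
  · refine Or.inl ⟨e.1, h1, by rw [apply1_self, h2], ⟨j, ?_, hj⟩, fun i hi => apply1_other hi⟩
    rw [hA]
    intro hji
    rw [hji, h1] at hj
    exact absurd hj (by decide)
  · exact Or.inr ⟨e.1, h1, by rw [apply1_self, h2], fun i hi => apply1_other hi⟩

lemma validStep_of_sirTrans {A : Fin n → Fin n → Prop}
    {x y : Fin n → Fin 3} (h : SIRTrans A x y) :
    ∃ e : Ev n, ValidStep x e ∧ y = apply1 x e := by
  rcases h with ⟨m, h0, h1, ⟨j, _, hj⟩, hoth⟩ | ⟨m, h0, h1, hoth⟩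
  · refine ⟨(m, 1), Or.inl ⟨rfl, h0, j, hj⟩, funext fun i => ?_⟩
    rcases eq_or_ne i m with rfl | hi
    · rw [h1, apply1_self]
    · rw [hoth i hi, apply1_other hi]
  · refine ⟨(m, 2), Or.inr ⟨rfl, h0⟩, funext fun i => ?_⟩
    rcases eq_or_ne i m with rfl | hi
    · rw [h1, apply1_self]
    · rw [hoth i hi, apply1_other hi]

lemma isSIRPath_run {A : Fin n → Fin n → Prop} (hA : ∀ j m : Fin n, A j m ↔ j ≠ m)
    {x : Fin n → Fin 3} {w : List (Ev n)} (h : Valid x w) :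
    IsSIRPath A x (applyAll x w) (run x w) := by
  refine ⟨run_ne_nil x w, run_head? x w, run_getLast? x w, ?_⟩
  induction w generalizing x with
  | nil => simp [run]; exact List.isChain_singleton _
  | cons e es ih =>
    rw [run]
    refine List.isChain_cons.mpr ⟨?_, ih h.2⟩
    intro z hz
    rw [run_head?] at hz
    cases hz
    exact sirTrans_of_validStep hA h.1

lemma exists_word {A : Fin n → Fin n → Prop}
    {x y : Fin n → Fin 3} {L : List (Fin n → Fin 3)} (h : IsSIRPath A x y L) :
    ∃ w : List (Ev n), Valid x w ∧ run x w = L ∧ applyAll x w = y := by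
  obtain ⟨-, hhead, hlast, hchain⟩ := h
  induction L generalizing x with
  | nil => simp at hhead
  | cons z L ih =>
    obtain rfl : x = z := by simpa using hhead.symm
    cases L with
    | nil =>
      obtain rfl : x = y := by simpa using hlast
      exact ⟨[], trivial, rfl, rfl⟩
    | cons z' L' =>
      obtain ⟨htrans, hchain'⟩ := List.isChain_cons_cons.mp hchain
      obtain ⟨e, hstep, rfl⟩ := validStep_of_sirTrans htrans
      obtain ⟨w, hw, hrun, happ⟩ := ih rfl
        (by rw [← hlast, List.getLast?_cons_cons]) hchain'
      exact ⟨e :: w, ⟨hstep, hw⟩, by rw [run, hrun], happ⟩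

lemma run_injOn {x : Fin n → Fin 3} {w w' : List (Ev n)}
    (hw : Valid x w) (hw' : Valid x w') (h : run x w = run x w') : w = w' := by
  induction w generalizing x w' with
  | nil =>
    cases w' with
    | nil => rfl
    | cons e es => simp [run, eq_comm] at h
  | cons e es ih =>
    cases w' with
    | nil => simp [run] at h
    | cons e' es' =>
      rw [run, run] at h
      injection h with _ htail
      have hheads : apply1 x e = apply1 x e' := by
        have h1 := run_head? (apply1 x e) es
        rw [htail, run_head?] at h1
        injection h1 with h1
        exact h1.symm
      have he1 : e.1 = e'.1 := by
        by_contra hne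
        have := congrFun hheads e.1
        rw [apply1_self, apply1_other hne] at this
        exact absurd (this ▸ validStep_lt hw.1) (lt_irrefl _)
      have he2 : e.2 = e'.2 := by
        have := congrFun hheads e.1
        rw [apply1_self, he1, apply1_self] at this
        exact this
      obtain rfl : e = e' := Prod.ext_iff.mpr ⟨he1, he2⟩
      rw [ih hw.2 hw'.2 htail]

/-! ### Valid words from the initial configuration are permutations of `E0` -/

def x0 (M : ℕ) : Fin (M+1) → Fin 3 := fun k => if (k : ℕ) = 0 then 1 else 0

variable {M : ℕ}

@[simp] lemma x0_zero : x0 M 0 = 1 := by simp [x0]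

lemma x0_ne_zero {k : Fin (M+1)} (h : k ≠ 0) : x0 M k = 0 := by
  have : (k : ℕ) ≠ 0 := fun hk => h (Fin.ext (by simpa using hk))
  simp [x0, this]

def E0 (M : ℕ) : List (Ev (M+1)) :=
  (List.ofFn fun i : Fin M => (i.succ, (1:Fin 3))) ++
    (0, (2:Fin 3)) :: (List.ofFn fun i : Fin M => (i.succ, (2:Fin 3)))

lemma length_E0 : (E0 M).length = 2 * M + 1 := by
  simp [E0]; ring

lemma mem_E0 {e : Ev (M+1)} : e ∈ E0 M ↔ (e.2 = 1 ∧ e.1 ≠ 0) ∨ e.2 = 2 := by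
  unfold E0
  rw [List.mem_append, List.mem_cons]
  simp only [List.mem_ofFn, Set.mem_range]
  constructor
  · rintro (⟨i, hi⟩ | rfl | ⟨i, hi⟩)
    · rw [← hi]; exact Or.inl ⟨rfl, Fin.succ_ne_zero i⟩
    · exact Or.inr rfl
    · rw [← hi]; exact Or.inr rfl
  · rintro (⟨h1, hm⟩ | h2)
    · obtain ⟨i, hi⟩ := Fin.exists_succ_eq.mpr hm
      exact Or.inl ⟨i, Prod.ext_iff.mpr ⟨hi, h1.symm⟩⟩
    · rcases eq_or_ne e.1 0 with h0 | hm
      · exact Or.inr (Or.inl (Prod.ext_iff.mpr ⟨h0, h2⟩))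
      · obtain ⟨i, hi⟩ := Fin.exists_succ_eq.mpr hm
        exact Or.inr (Or.inr ⟨i, Prod.ext_iff.mpr ⟨hi, h2.symm⟩⟩)

lemma nodup_E0 : (E0 M).Nodup := by
  refine List.Nodup.append ?_ (List.nodup_cons.mpr ⟨?_, ?_⟩) ?_
  · exact List.nodup_ofFn.mpr fun i j h => Fin.succ_injective _ (Prod.ext_iff.mp h).1
  · simp only [List.mem_ofFn, Set.mem_range, not_exists]
    intro i h
    exact Fin.succ_ne_zero i (Prod.ext_iff.mp h).1
  · exact List.nodup_ofFn.mpr fun i j h => Fin.succ_injective _ (Prod.ext_iff.mp h).1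
  · intro e he he'
    simp only [List.mem_ofFn, Set.mem_range] at he
    simp only [List.mem_cons, List.mem_ofFn, Set.mem_range] at he'
    obtain ⟨i, rfl⟩ := he
    rcases he' with h | ⟨j, hj⟩
    · have h2 : (1 : Fin 3) = 2 := (Prod.ext_iff.mp h).2
      exact absurd h2 (by decide)
    · have h2 : (2 : Fin 3) = 1 := (Prod.ext_iff.mp hj).2
      exact absurd h2 (by decide)

/-- The set of valid words realising the epidemic. -/
def FullWord (M : ℕ) (w : List (Ev (M+1))) : Prop :=
  Valid (x0 M) w ∧ applyAll (x0 M) w = fun _ => 2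

lemma FullWord.perm_E0 {w : List (Ev (M+1))} (h : FullWord M w) : w.Perm (E0 M) := by
  obtain ⟨hv, hfin⟩ := h
  have hsub1 : w ⊆ E0 M := by
    intro e he
    rw [mem_E0]
    rcases snd_mem_of_valid hv he with h1 | h2
    · refine Or.inl ⟨h1, ?_⟩
      intro h0
      refine not_mem_of_le hv (e := e) ?_ he
      rw [h1, h0, x0_zero]
    · exact Or.inr h2
  have hsub2 : E0 M ⊆ w := by
    intro e he
    rw [mem_E0] at he
    have hrec : ∀ m : Fin (M+1), (m, (2:Fin 3)) ∈ w := by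
      intro m
      have h2 : applyAll (x0 M) w m = 2 := by rw [hfin]
      have : applyAll (x0 M) w m ≠ x0 M m := by
        rw [h2]
        rcases eq_or_ne m 0 with rfl | hm
        · simp
        · rw [x0_ne_zero hm]; decide
      have := mem_of_changed hv m this
      rwa [h2] at this
    rcases he with ⟨h1, hm⟩ | h2
    · obtain ⟨m, v⟩ := e
      obtain rfl : v = 1 := h1
      exact infection_mem hv m (x0_ne_zero hm) (hrec m)
    · obtain ⟨m, v⟩ := e
      obtain rfl : v = 2 := h2
      exact hrec m
  exact ((nodup_of_valid hv).subperm hsub1).antisymm (nodup_E0.subperm hsub2)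

/-- In a full word, the infection of a (nonzero) node precedes its recovery. -/
lemma FullWord.pair_sublist {w : List (Ev (M+1))} (h : FullWord M w)
    {m : Fin (M+1)} (hm : m ≠ 0) : List.Sublist [(m, (1:Fin 3)), (m, (2:Fin 3))] w := by
  have hmem : (m, (2:Fin 3)) ∈ w := h.perm_E0.mem_iff.mpr (mem_E0.mpr (Or.inr rfl))
  obtain ⟨w₁, w₂, rfl⟩ := List.append_of_mem hmem
  obtain ⟨hv1, hv2⟩ := valid_append.mp h.1
  have h1 : applyAll (x0 M) w₁ m = 1 := by
    rcases hv2.1 with ⟨hx, -⟩ | ⟨-, hx⟩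
    · have hx' : (2 : Fin 3) = 1 := hx
      exact absurd hx' (by decide)
    · exact hx
  have hmem1 : (m, (1:Fin 3)) ∈ w₁ := by
    have := mem_of_changed hv1 m (by rw [h1, x0_ne_zero hm]; decide)
    rwa [h1] at this
  have : List.Sublist ([(m, (1:Fin 3))] ++ [(m, (2:Fin 3))]) (w₁ ++ (m, (2:Fin 3)) :: w₂) :=
    List.Sublist.append (List.singleton_sublist.mpr hmem1)
      (List.cons_sublist_cons.mpr (List.nil_sublist w₂))
  exact this

/-- In a duplicate-free list, two elements cannot occur in both orders. -/
lemma eq_of_sublist_of_sublist {α : Type*} {a b : α} :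
    ∀ {w : List α}, w.Nodup → List.Sublist [a, b] w → List.Sublist [b, a] w → a = b := by
  intro w
  induction w with
  | nil => intro _ h; exact absurd h (by simp)
  | cons c t ih =>
    intro hnd h1 h2
    cases h1 with
    | cons _ h1' =>
      cases h2 with
      | cons _ h2' => exact ih (List.nodup_cons.mp hnd).2 h1' h2'
      | cons_cons h2' =>
        exact absurd (h1'.subset (by simp)) (List.nodup_cons.mp hnd).1
    | cons_cons h1' =>
      cases h2 with
      | cons _ h2' =>
        exact absurd (h2'.subset (by simp)) (List.nodup_cons.mp hnd).1
      | cons_cons h2' => rfl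


/-! ### The flip injection (upper bound) -/

def gT (T : Finset (Fin M)) (e : Ev (M+1)) : Ev (M+1) :=
  if e.1 ∈ T.image Fin.succ then (e.1, Equiv.swap (1:Fin 3) 2 e.2) else e

lemma gT_apply_mem {T : Finset (Fin M)} {j : Fin M} (hj : j ∈ T) (v : Fin 3) :
    gT T (j.succ, v) = (j.succ, Equiv.swap (1:Fin 3) 2 v) := by
  unfold gT
  rw [if_pos]
  exact Finset.mem_image.mpr ⟨j, hj, rfl⟩

lemma gT_apply_not_mem {T : Finset (Fin M)} {j : Fin M} (hj : j ∉ T) (v : Fin 3) :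
    gT T (j.succ, v) = (j.succ, v) := by
  unfold gT
  rw [if_neg]
  rintro h
  obtain ⟨b, hb, hbe⟩ := Finset.mem_image.mp h
  obtain rfl : b = j := Fin.succ_injective _ hbe
  exact hj hb

lemma gT_invol (T : Finset (Fin M)) : Function.Involutive (gT T) := by
  intro e
  by_cases h : e.1 ∈ T.image Fin.succ
  · simp [gT, h, Equiv.swap_apply_self]
  · simp [gT, h]

lemma gT_empty (e : Ev (M+1)) : gT (∅ : Finset (Fin M)) e = e := by
  rw [gT, if_neg]
  simp

lemma gT_mem_E0 (T : Finset (Fin M)) {e : Ev (M+1)} (he : e ∈ E0 M) : gT T e ∈ E0 M := by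
  rw [mem_E0] at he ⊢
  by_cases h : e.1 ∈ T.image Fin.succ
  · have h0 : e.1 ≠ 0 := by
      obtain ⟨b, -, hbe⟩ := Finset.mem_image.mp h
      rw [← hbe]; exact Fin.succ_ne_zero b
    rw [gT, if_pos h]
    rcases he with ⟨h1, -⟩ | h2
    · rw [h1]
      exact Or.inr (Equiv.swap_apply_left 1 2)
    · rw [h2]
      exact Or.inl ⟨Equiv.swap_apply_right 1 2, h0⟩
  · rw [gT, if_neg h]; exact he

lemma map_gT_perm_E0 {w : List (Ev (M+1))} (hw : w.Perm (E0 M)) (T : Finset (Fin M)) :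
    (w.map (gT T)).Perm (E0 M) := by
  have h1 : (w.map (gT T)).Perm ((E0 M).map (gT T)) := hw.map _
  refine h1.trans ?_
  have hnd : ((E0 M).map (gT T)).Nodup := nodup_E0.map (gT_invol T).injective
  have hsub : (E0 M).map (gT T) ⊆ E0 M := by
    intro e he
    obtain ⟨f, hf, rfl⟩ := List.mem_map.mp he
    exact gT_mem_E0 T hf
  exact (hnd.subperm hsub).perm_of_length_le (by rw [List.length_map])

/-- The key reconstruction: `T` is recoverable from the flipped word. -/
lemma mem_T_iff {w : List (Ev (M+1))} (hw : FullWord M w) (T : Finset (Fin M)) (j : Fin M) :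
    j ∈ T ↔ List.Sublist [(j.succ, (2:Fin 3)), (j.succ, 1)] (w.map (gT T)) := by
  have hpair := hw.pair_sublist (Fin.succ_ne_zero j)
  have hnd : (w.map (gT T)).Nodup := (nodup_of_valid hw.1).map (gT_invol T).injective
  have hmap := hpair.map (gT T)
  constructor
  · intro hj
    rw [List.map_cons, List.map_cons, List.map_nil, gT_apply_mem hj, gT_apply_mem hj,
      Equiv.swap_apply_left, Equiv.swap_apply_right] at hmap
    exact hmap
  · intro hsub
    by_contra hj
    rw [List.map_cons, List.map_cons, List.map_nil, gT_apply_not_mem hj,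
      gT_apply_not_mem hj] at hmap
    have := eq_of_sublist_of_sublist hnd hmap hsub
    have h2 : (1 : Fin 3) = 2 := (Prod.ext_iff.mp this).2
    exact absurd h2 (by decide)

def wstar (M : ℕ) : List (Ev (M+1)) :=
  (0, 2) :: ((List.ofFn fun i : Fin M => (i.succ, (1:Fin 3))) ++
    List.ofFn fun i : Fin M => (i.succ, (2:Fin 3)))

lemma wstar_perm : (wstar M).Perm (E0 M) := List.perm_middle.symm

lemma pair_sublist_wstar (j : Fin M) :
    List.Sublist [(j.succ, (1:Fin 3)), (j.succ, 2)] (wstar M) := by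
  refine List.Sublist.cons _ ?_
  have h1 : (j.succ, (1:Fin 3)) ∈ List.ofFn fun i : Fin M => (i.succ, (1:Fin 3)) := by
    rw [List.mem_ofFn]; exact ⟨j, rfl⟩
  have h2 : (j.succ, (2:Fin 3)) ∈ List.ofFn fun i : Fin M => (i.succ, (2:Fin 3)) := by
    rw [List.mem_ofFn]; exact ⟨j, rfl⟩
  exact List.Sublist.append (List.singleton_sublist.mpr h1) (List.singleton_sublist.mpr h2)

lemma not_fullWord_wstar (hM : 1 ≤ M) : ¬ FullWord M (wstar M) := by
  rintro ⟨hv, -⟩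
  obtain ⟨M', rfl⟩ : ∃ M', M = M' + 1 := ⟨M - 1, (Nat.succ_pred_eq_of_pos hM).symm⟩
  rw [wstar, List.ofFn_succ, List.cons_append] at hv
  rcases hv.2.1 with ⟨-, -, j, hj⟩ | ⟨h2, -⟩
  · rcases eq_or_ne j 0 with rfl | hj0
    · rw [apply1_self (x := x0 (M' + 1)) ((0 : Fin (M'+2)), (2:Fin 3))] at hj
      have hj' : (2 : Fin 3) = 1 := hj
      exact absurd hj' (by decide)
    · rw [apply1_other hj0, x0_ne_zero hj0] at hj
      exact absurd hj (by decide)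
  · have h2' : (1 : Fin 3) = 2 := h2
    exact absurd h2' (by decide)

/-- The full upper-bound cardinality estimate. -/
lemma card_upper (hM : 1 ≤ M) (Wfin : Finset (List (Ev (M+1))))
    (hW : ∀ w, w ∈ Wfin ↔ FullWord M w) :
    Wfin.card * 2 ^ M < Nat.factorial (2 * M + 1) := by
  classical
  set PF := (E0 M).permutations.toFinset with hPFdef
  have hPFmem : ∀ w : List (Ev (M+1)), w ∈ PF ↔ w.Perm (E0 M) := by
    intro w
    rw [hPFdef, List.mem_toFinset, List.mem_permutations]
  have hPF : PF.card = Nat.factorial (2 * M + 1) := by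
    rw [hPFdef, List.toFinset_card_of_nodup (List.nodup_permutations _ nodup_E0),
      List.length_permutations, length_E0]
  have hwstar : wstar M ∈ PF := (hPFmem _).mpr wstar_perm
  have hndstar : (wstar M).Nodup := wstar_perm.nodup_iff.mpr nodup_E0
  have hfinal : (Wfin ×ˢ (Finset.univ : Finset (Finset (Fin M)))).card ≤
      (PF.erase (wstar M)).card := by
    refine Finset.card_le_card_of_injOn (fun p => p.1.map (gT p.2)) ?_ ?_
    · rintro ⟨w, T⟩ hp
      rw [Finset.mem_coe, Finset.mem_product] at hp
      have hw : FullWord M w := (hW w).mp hp.1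
      rw [Finset.mem_coe, Finset.mem_erase]
      refine ⟨?_, (hPFmem _).mpr (map_gT_perm_E0 hw.perm_E0 T)⟩
      intro heq
      simp only at heq
      have hT : T = ∅ := by
        ext j
        simp only [Finset.notMem_empty, iff_false]
        intro hj
        have hsub := (mem_T_iff hw T j).mp hj
        rw [heq] at hsub
        have hbad := eq_of_sublist_of_sublist hndstar hsub (pair_sublist_wstar j)
        have h21 : (2 : Fin 3) = 1 := (Prod.ext_iff.mp hbad).2
        exact absurd h21 (by decide)
      rw [hT] at heq
      have hww : w = wstar M := by
        rw [← heq, show gT (∅ : Finset (Fin M)) = id from funext gT_empty, List.map_id]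
      exact not_fullWord_wstar hM (hww ▸ hw)
    · rintro ⟨w, T⟩ hp ⟨w', T'⟩ hp' heq
      simp only [Finset.coe_product, Set.mem_prod, Finset.mem_coe] at hp hp'
      have hw : FullWord M w := (hW w).mp hp.1
      have hw' : FullWord M w' := (hW w').mp hp'.1
      simp only at heq
      have hTT : T = T' := by
        ext j
        rw [mem_T_iff hw T j, mem_T_iff hw' T' j, heq]
      obtain rfl := hTT
      obtain rfl : w = w' := List.map_injective_iff.mpr (gT_invol T).injective heq
      rfl
  have hcard : (Wfin ×ˢ (Finset.univ : Finset (Finset (Fin M)))).card = Wfin.card * 2 ^ M := by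
    rw [Finset.card_product, Finset.card_univ, Fintype.card_finset, Fintype.card_fin]
  calc Wfin.card * 2 ^ M
      = (Wfin ×ˢ (Finset.univ : Finset (Finset (Fin M)))).card := hcard.symm
    _ ≤ (PF.erase (wstar M)).card := hfinal
    _ < PF.card := Finset.card_erase_lt_of_mem hwstar
    _ = Nat.factorial (2 * M + 1) := hPF

/-! ### The lower-bound family of words -/

def mapI (l : List (Fin (M+1))) : List (Ev (M+1)) := l.map fun m => (m, 1)
def mapR (l : List (Fin (M+1))) : List (Ev (M+1)) := l.map fun m => (m, 2)

lemma valid_mapI : ∀ {l : List (Fin (M+1))} {x}, l.Nodup → (∀ m ∈ l, x m = 0) →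
    (∃ j, x j = 1) →
    Valid x (mapI l) ∧ ∀ i, applyAll x (mapI l) i = if i ∈ l then 1 else x i := by
  intro l
  induction l with
  | nil => exact fun _ _ _ => ⟨trivial, fun i => by simp [mapI]⟩
  | cons m t ih =>
    intro x hnd h0 hinf
    have hmt : m ∉ t := (List.nodup_cons.mp hnd).1
    have hx' : ∀ m' ∈ t, apply1 x (m, (1:Fin 3)) m' = 0 := fun m' hm' => by
      rw [apply1_other (show m' ≠ (m,(1:Fin 3)).1 from fun h => hmt ((show m = m' from h.symm) ▸ hm'))]
      exact h0 m' (List.mem_cons_of_mem _ hm')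
    obtain ⟨hv, happ⟩ := ih (List.nodup_cons.mp hnd).2 hx' ⟨m, apply1_self (m, (1:Fin 3))⟩
    refine ⟨⟨Or.inl ⟨rfl, h0 m (List.mem_cons_self ..), hinf⟩, hv⟩, ?_⟩
    intro i
    rw [show mapI (m :: t) = (m,(1:Fin 3)) :: mapI t from rfl, applyAll_cons, happ i]
    by_cases hit : i ∈ t
    · simp [hit]
    · by_cases him : i = m
      · subst him
        simp only [List.mem_cons, true_or, if_true, if_neg hit]
        exact apply1_self (i, (1:Fin 3))
      · simp only [List.mem_cons, hit, him, or_self, if_false]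
        exact apply1_other (show i ≠ (m,(1:Fin 3)).1 from him)

lemma valid_mapR : ∀ {l : List (Fin (M+1))} {x}, l.Nodup → (∀ m ∈ l, x m = 1) →
    Valid x (mapR l) ∧ ∀ i, applyAll x (mapR l) i = if i ∈ l then 2 else x i := by
  intro l
  induction l with
  | nil => exact fun _ _ => ⟨trivial, fun i => by simp [mapR]⟩
  | cons m t ih =>
    intro x hnd h1
    have hmt : m ∉ t := (List.nodup_cons.mp hnd).1
    have hx' : ∀ m' ∈ t, apply1 x (m, (2:Fin 3)) m' = 1 := fun m' hm' => by
      rw [apply1_other (show m' ≠ (m,(2:Fin 3)).1 from fun h => hmt ((show m = m' from h.symm) ▸ hm'))]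
      exact h1 m' (List.mem_cons_of_mem _ hm')
    obtain ⟨hv, happ⟩ := ih (List.nodup_cons.mp hnd).2 hx'
    refine ⟨⟨Or.inr ⟨rfl, h1 m (List.mem_cons_self ..)⟩, hv⟩, ?_⟩
    intro i
    rw [show mapR (m :: t) = (m,(2:Fin 3)) :: mapR t from rfl, applyAll_cons, happ i]
    by_cases hit : i ∈ t
    · simp [hit]
    · by_cases him : i = m
      · subst him
        simp only [List.mem_cons, true_or, if_true, if_neg hit]
        exact apply1_self (i, (2:Fin 3))
      · simp only [List.mem_cons, hit, him, or_self, if_false]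
        exact apply1_other (show i ≠ (m,(2:Fin 3)).1 from him)

def infNodes (σ : Equiv.Perm (Fin M)) : List (Fin (M+1)) := List.ofFn fun i => (σ i).succ

lemma mem_infNodes {σ : Equiv.Perm (Fin M)} {m : Fin (M+1)} :
    m ∈ infNodes σ ↔ m ≠ 0 := by
  rw [infNodes, List.mem_ofFn]
  constructor
  · rintro ⟨i, rfl⟩; exact Fin.succ_ne_zero _
  · intro hm
    obtain ⟨j, hj⟩ := Fin.exists_succ_eq.mpr hm
    exact ⟨σ.symm j, by simp only [Equiv.apply_symm_apply, hj]⟩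

lemma nodup_infNodes (σ : Equiv.Perm (Fin M)) : (infNodes σ).Nodup :=
  List.nodup_ofFn.mpr fun i j h => σ.injective (Fin.succ_injective _ h)

lemma length_infNodes (σ : Equiv.Perm (Fin M)) : (infNodes σ).length = M := by
  simp [infNodes]

lemma zero_not_mem_infNodes (σ : Equiv.Perm (Fin M)) : (0 : Fin (M+1)) ∉ infNodes σ := by
  rw [mem_infNodes]; simp

def Mfun (σ : Equiv.Perm (Fin M)) (i : Fin M) : Fin (M+1) :=
  if (i : ℕ) = 0 then 0 else (σ i).succ

lemma Mfun_injective (σ : Equiv.Perm (Fin M)) : Function.Injective (Mfun σ) := by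
  intro a b h
  unfold Mfun at h
  split_ifs at h with ha hb hb
  · exact Fin.ext (ha.trans hb.symm)
  · exact absurd h.symm (Fin.succ_ne_zero _)
  · exact absurd h (Fin.succ_ne_zero _)
  · exact σ.injective (Fin.succ_injective _ h)

/-- The lower-bound word family. -/
def Fword (σ τ : Equiv.Perm (Fin M)) (k : Fin (2*M+1)) : List (Ev (M+1)) :=
  if (k : ℕ) < M then
    mapI ((infNodes σ).take ((k : ℕ)+1)) ++
      (0, 2) :: (mapI ((infNodes σ).drop ((k : ℕ)+1)) ++ mapR (infNodes τ))
  else if (k : ℕ) < 2*M then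
    mapI (infNodes σ) ++ (mapR ((infNodes τ).take ((k : ℕ)-M+1)) ++
      (0, 2) :: mapR ((infNodes τ).drop ((k : ℕ)-M+1)))
  else
    mapI ((infNodes σ).take 1) ++ (mapR ((infNodes σ).take 1) ++
      (mapI ((infNodes σ).drop 1) ++ mapR (List.ofFn fun i => Mfun σ (τ i))))


lemma fullWord_case1 (hM : 1 ≤ M) (σ τ : Equiv.Perm (Fin M)) {c : ℕ} (hc1 : 1 ≤ c) :
    FullWord M (mapI ((infNodes σ).take c) ++
      (0, 2) :: (mapI ((infNodes σ).drop c) ++ mapR (infNodes τ))) := by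
  have hnd := nodup_infNodes σ
  have hnd' : ((infNodes σ).take c ++ (infNodes σ).drop c).Nodup := by
    rw [List.take_append_drop]; exact hnd
  have hdisj := List.disjoint_of_nodup_append hnd'
  have hmem : ∀ m : Fin (M+1),
      (m ∈ (infNodes σ).take c ∨ m ∈ (infNodes σ).drop c) ↔ m ≠ 0 := fun m => by
    rw [← List.mem_append, List.take_append_drop, mem_infNodes]
  have h0t₁ : (0 : Fin (M+1)) ∉ (infNodes σ).take c := fun h => ((hmem 0).mp (Or.inl h)) rfl
  have h0t₂ : (0 : Fin (M+1)) ∉ (infNodes σ).drop c := fun h => ((hmem 0).mp (Or.inr h)) rfl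
  obtain ⟨hv₁, ha₁⟩ := valid_mapI (x := x0 M) (List.Nodup.sublist (List.take_sublist _ _) hnd)
    (fun m hm => x0_ne_zero ((hmem m).mp (Or.inl hm))) ⟨0, x0_zero⟩
  set x₁ := applyAll (x0 M) (mapI ((infNodes σ).take c)) with hx₁
  have hx₁0 : x₁ 0 = 1 := by rw [ha₁ 0, if_neg h0t₁, x0_zero]
  set x₂ := apply1 x₁ (0, (2:Fin 3)) with hx₂def
  have hx₂ : ∀ m : Fin (M+1), m ≠ 0 → x₂ m = x₁ m := fun m hm =>
    apply1_other (show m ≠ ((0:Fin (M+1)), (2:Fin 3)).1 from hm)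
  have hx₂0 : x₂ 0 = 2 := apply1_self ((0:Fin (M+1)), (2:Fin 3))
  have ht₁ne : (infNodes σ).take c ≠ [] := by
    apply List.ne_nil_of_length_pos
    rw [List.length_take, length_infNodes]
    omega
  have hinf₂ : ∃ j, x₂ j = 1 := by
    obtain ⟨m₁, hm₁⟩ := List.exists_mem_of_ne_nil _ ht₁ne
    refine ⟨m₁, ?_⟩
    rw [hx₂ m₁ ((hmem m₁).mp (Or.inl hm₁)), ha₁ m₁, if_pos hm₁]
  obtain ⟨hv₃, ha₃⟩ := valid_mapI (x := x₂) (List.Nodup.sublist (List.drop_sublist _ _) hnd)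
    (fun m hm => by
      rw [hx₂ m ((hmem m).mp (Or.inr hm)), ha₁ m, if_neg (fun h => hdisj h hm)]
      exact x0_ne_zero ((hmem m).mp (Or.inr hm))) hinf₂
  set x₃ := applyAll x₂ (mapI ((infNodes σ).drop c)) with hx₃
  obtain ⟨hv₄, ha₄⟩ := valid_mapR (x := x₃) (nodup_infNodes τ)
    (fun m hm => by
      have hm0 : m ≠ 0 := mem_infNodes.mp hm
      rcases (hmem m).mpr hm0 with h1 | h2
      · rw [ha₃ m, if_neg (fun h => hdisj h1 h), hx₂ m hm0, ha₁ m, if_pos h1]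
      · rw [ha₃ m, if_pos h2])
  constructor
  · rw [valid_append]
    exact ⟨hv₁, Or.inr ⟨rfl, hx₁0⟩, valid_append.mpr ⟨hv₃, hv₄⟩⟩
  · rw [applyAll_append, applyAll_cons, ← hx₁, ← hx₂def, applyAll_append, ← hx₃]
    funext i
    rw [ha₄ i]
    rcases eq_or_ne i 0 with rfl | hi
    · rw [if_neg (fun h => (mem_infNodes.mp h) rfl), ha₃ 0, if_neg h0t₂, hx₂0]
    · rw [if_pos (mem_infNodes.mpr hi)]

lemma fullWord_case2 (σ τ : Equiv.Perm (Fin M)) {c : ℕ} :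
    FullWord M (mapI (infNodes σ) ++ (mapR ((infNodes τ).take c) ++
      (0, 2) :: mapR ((infNodes τ).drop c))) := by
  have hnd := nodup_infNodes τ
  have hnd' : ((infNodes τ).take c ++ (infNodes τ).drop c).Nodup := by
    rw [List.take_append_drop]; exact hnd
  have hdisj := List.disjoint_of_nodup_append hnd'
  have hmem : ∀ m : Fin (M+1),
      (m ∈ (infNodes τ).take c ∨ m ∈ (infNodes τ).drop c) ↔ m ≠ 0 := fun m => by
    rw [← List.mem_append, List.take_append_drop, mem_infNodes]
  have h0r₁ : (0 : Fin (M+1)) ∉ (infNodes τ).take c := fun h => ((hmem 0).mp (Or.inl h)) rfl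
  have h0r₂ : (0 : Fin (M+1)) ∉ (infNodes τ).drop c := fun h => ((hmem 0).mp (Or.inr h)) rfl
  obtain ⟨hv₁, ha₁⟩ := valid_mapI (x := x0 M) (nodup_infNodes σ)
    (fun m hm => x0_ne_zero (mem_infNodes.mp hm)) ⟨0, x0_zero⟩
  set x₁ := applyAll (x0 M) (mapI (infNodes σ)) with hx₁
  have hx₁m : ∀ m : Fin (M+1), m ≠ 0 → x₁ m = 1 := fun m hm => by
    rw [ha₁ m, if_pos (mem_infNodes.mpr hm)]
  have hx₁0 : x₁ 0 = 1 := by rw [ha₁ 0, if_neg (zero_not_mem_infNodes σ), x0_zero]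
  obtain ⟨hv₂, ha₂⟩ := valid_mapR (x := x₁) (List.Nodup.sublist (List.take_sublist _ _) hnd)
    (fun m hm => hx₁m m ((hmem m).mp (Or.inl hm)))
  set x₂ := applyAll x₁ (mapR ((infNodes τ).take c)) with hx₂
  have hx₂0 : x₂ 0 = 1 := by rw [ha₂ 0, if_neg h0r₁]; exact hx₁0
  set x₃ := apply1 x₂ (0, (2:Fin 3)) with hx₃def
  have hx₃m : ∀ m : Fin (M+1), m ≠ 0 → x₃ m = x₂ m := fun m hm =>
    apply1_other (show m ≠ ((0:Fin (M+1)), (2:Fin 3)).1 from hm)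
  obtain ⟨hv₄, ha₄⟩ := valid_mapR (x := x₃) (List.Nodup.sublist (List.drop_sublist _ _) hnd)
    (fun m hm => by
      have hm0 : m ≠ 0 := (hmem m).mp (Or.inr hm)
      rw [hx₃m m hm0, ha₂ m, if_neg (fun h => hdisj h hm)]
      exact hx₁m m hm0)
  constructor
  · rw [valid_append, valid_append]
    exact ⟨hv₁, hv₂, Or.inr ⟨rfl, hx₂0⟩, hv₄⟩
  · rw [applyAll_append, applyAll_append, ← hx₁, ← hx₂, applyAll_cons, ← hx₃def]
    funext i
    rw [ha₄ i]
    rcases eq_or_ne i 0 with rfl | hi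
    · rw [if_neg h0r₂]
      exact apply1_self ((0:Fin (M+1)), (2:Fin 3))
    · rcases (hmem i).mpr hi with h1 | h2
      · rw [if_neg (fun h => hdisj h1 h), hx₃m i hi, ha₂ i, if_pos h1]
      · rw [if_pos h2]

lemma fullWord_case3 {M' : ℕ} (σ τ : Equiv.Perm (Fin (M'+1))) :
    FullWord (M'+1) (mapI ((infNodes σ).take 1) ++ (mapR ((infNodes σ).take 1) ++
      (mapI ((infNodes σ).drop 1) ++ mapR (List.ofFn fun i => Mfun σ (τ i))))) := by
  set s := (σ 0).succ with hs
  set rest := (List.ofFn fun i : Fin M' => (σ i.succ).succ) with hrest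
  have hsplit : infNodes σ = s :: rest := by rw [infNodes, List.ofFn_succ]
  have htake : (infNodes σ).take 1 = [s] := by rw [hsplit]; rfl
  have hdrop : (infNodes σ).drop 1 = rest := by rw [hsplit]; rfl
  have hs0 : s ≠ 0 := Fin.succ_ne_zero _
  have hsrest : s ∉ rest := by
    have := nodup_infNodes σ
    rw [hsplit, List.nodup_cons] at this
    exact this.1
  have h0rest : (0 : Fin (M'+2)) ∉ rest := by
    intro h
    rw [hrest, List.mem_ofFn] at h
    obtain ⟨i, hi⟩ := h
    exact Fin.succ_ne_zero _ hi
  have hmemrest : ∀ m : Fin (M'+2), m ∈ rest ↔ (m ≠ 0 ∧ m ≠ s) := by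
    intro m
    constructor
    · intro h
      exact ⟨fun h0 => h0rest (h0 ▸ h), fun h0 => hsrest (h0 ▸ h)⟩
    · rintro ⟨h0, hms⟩
      have : m ∈ infNodes σ := mem_infNodes.mpr h0
      rw [hsplit, List.mem_cons] at this
      exact this.resolve_left hms
  rw [htake, hdrop]
  have hv₁ : ValidStep (x0 (M'+1)) (s, (1:Fin 3)) := Or.inl ⟨rfl, x0_ne_zero hs0, 0, x0_zero⟩
  set x₁ := apply1 (x0 (M'+1)) (s, (1:Fin 3)) with hx₁
  have hx₁s : x₁ s = 1 := apply1_self (s, (1:Fin 3))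
  have hx₁m : ∀ m, m ≠ s → x₁ m = x0 (M'+1) m := fun m hm =>
    apply1_other (show m ≠ (s, (1:Fin 3)).1 from hm)
  have hv₂ : ValidStep x₁ (s, (2:Fin 3)) := Or.inr ⟨rfl, hx₁s⟩
  set x₂ := apply1 x₁ (s, (2:Fin 3)) with hx₂
  have hx₂s : x₂ s = 2 := apply1_self (s, (2:Fin 3))
  have hx₂m : ∀ m, m ≠ s → x₂ m = x₁ m := fun m hm =>
    apply1_other (show m ≠ (s, (2:Fin 3)).1 from hm)
  have hx₂0 : x₂ 0 = 1 := by
    rw [hx₂m 0 (Ne.symm hs0), hx₁m 0 (Ne.symm hs0), x0_zero]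
  obtain ⟨hv₃, ha₃⟩ := valid_mapI (x := x₂)
    (by
      have := nodup_infNodes σ
      rw [hsplit, List.nodup_cons] at this
      exact this.2)
    (fun m hm => by
      obtain ⟨h0, hms⟩ := (hmemrest m).mp hm
      rw [hx₂m m hms, hx₁m m hms]
      exact x0_ne_zero h0) ⟨0, hx₂0⟩
  set x₃ := applyAll x₂ (mapI rest) with hx₃
  set mlist := (List.ofFn fun i => Mfun σ (τ i)) with hmlist
  have hmem_mlist : ∀ m : Fin (M'+2), m ∈ mlist ↔ m = 0 ∨ (m ≠ 0 ∧ m ≠ s) := by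
    intro m
    rw [hmlist, List.mem_ofFn]
    constructor
    · rintro ⟨i, rfl⟩
      simp only [Mfun]
      split_ifs with h
      · exact Or.inl rfl
      · refine Or.inr ⟨Fin.succ_ne_zero _, fun hc => ?_⟩
        rw [hs] at hc
        have : τ i = 0 := σ.injective (Fin.succ_injective _ hc)
        rw [this] at h
        exact h rfl
    · rintro (rfl | ⟨h0, hms⟩)
      · refine ⟨τ.symm 0, ?_⟩
        show Mfun σ (τ (τ.symm 0)) = 0
        rw [Equiv.apply_symm_apply]
        simp [Mfun]
      · obtain ⟨j, hj⟩ := Fin.exists_succ_eq.mpr h0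
        have hb : σ.symm j ≠ 0 := by
          intro hb
          apply hms
          rw [hs, ← hj, ← σ.apply_symm_apply j, hb]
        have hbn : ((σ.symm j : Fin (M'+1)) : ℕ) ≠ 0 := fun h => hb (Fin.ext h)
        refine ⟨τ.symm (σ.symm j), ?_⟩
        show Mfun σ (τ (τ.symm (σ.symm j))) = m
        rw [Equiv.apply_symm_apply]
        unfold Mfun
        rw [if_neg hbn, Equiv.apply_symm_apply, hj]
  have hnd_mlist : mlist.Nodup :=
    List.nodup_ofFn.mpr fun a b h => τ.injective (Mfun_injective σ h)
  obtain ⟨hv₄, ha₄⟩ := valid_mapR (x := x₃) hnd_mlist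
    (fun m hm => by
      rcases (hmem_mlist m).mp hm with rfl | ⟨h0, hms⟩
      · rw [ha₃ 0, if_neg h0rest]
        exact hx₂0
      · rw [ha₃ m, if_pos ((hmemrest m).mpr ⟨h0, hms⟩)])
  constructor
  · rw [show mapI [s] = [(s, (1:Fin 3))] from rfl, show mapR [s] = [(s, (2:Fin 3))] from rfl,
      valid_append, valid_append, valid_append]
    exact ⟨⟨hv₁, trivial⟩, ⟨hv₂, trivial⟩, hv₃, hv₄⟩
  · rw [show mapI [s] = [(s, (1:Fin 3))] from rfl, show mapR [s] = [(s, (2:Fin 3))] from rfl,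
      applyAll_append, applyAll_append, applyAll_append]
    have e₁ : applyAll (x0 (M'+1)) [(s, (1:Fin 3))] = x₁ := rfl
    have e₂ : applyAll x₁ [(s, (2:Fin 3))] = x₂ := rfl
    rw [e₁, e₂, ← hx₃]
    funext i
    rw [ha₄ i]
    rcases eq_or_ne i 0 with rfl | hi0
    · rw [if_pos ((hmem_mlist 0).mpr (Or.inl rfl))]
    · rcases eq_or_ne i s with rfl | his
      · rw [if_neg (fun h => by
          rcases (hmem_mlist s).mp h with h' | ⟨-, hms⟩
          · exact hi0 h'
          · exact hms rfl), ha₃ s, if_neg hsrest, hx₂s]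
      · rw [if_pos ((hmem_mlist i).mpr (Or.inr ⟨hi0, his⟩))]

lemma fullWord_Fword (hM : 1 ≤ M) (σ τ : Equiv.Perm (Fin M)) (k : Fin (2*M+1)) :
    FullWord M (Fword σ τ k) := by
  unfold Fword
  split_ifs with h1 h2
  · exact fullWord_case1 hM σ τ (Nat.le_add_left 1 _)
  · exact fullWord_case2 σ τ
  · obtain ⟨M', rfl⟩ : ∃ M', M = M' + 1 := ⟨M - 1, (Nat.succ_pred_eq_of_pos hM).symm⟩
    exact fullWord_case3 σ τ

/-! ### Injectivity of the lower-bound family -/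

def infOrder (w : List (Ev (M+1))) : List (Fin (M+1)) :=
  (w.filter fun e => decide (e.2 = 1)).map Prod.fst

def recOrder (w : List (Ev (M+1))) : List (Fin (M+1)) :=
  (w.filter fun e => decide (e.2 = 2)).map Prod.fst

lemma infOrder_append (w₁ w₂ : List (Ev (M+1))) :
    infOrder (w₁ ++ w₂) = infOrder w₁ ++ infOrder w₂ := by
  simp [infOrder, List.filter_append]

lemma recOrder_append (w₁ w₂ : List (Ev (M+1))) :
    recOrder (w₁ ++ w₂) = recOrder w₁ ++ recOrder w₂ := by
  simp [recOrder, List.filter_append]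

lemma infOrder_mapI (l : List (Fin (M+1))) : infOrder (mapI l) = l := by
  induction l with
  | nil => rfl
  | cons m t ih =>
    rw [show mapI (m :: t) = (m, (1:Fin 3)) :: mapI t from rfl, infOrder,
      List.filter_cons_of_pos (by simp), List.map_cons]
    rw [infOrder] at ih
    rw [ih]

lemma infOrder_mapR (l : List (Fin (M+1))) : infOrder (mapR l) = [] := by
  induction l with
  | nil => rfl
  | cons m t ih =>
    rw [show mapR (m :: t) = (m, (2:Fin 3)) :: mapR t from rfl, infOrder,
      List.filter_cons_of_neg (by simp)]
    exact ih

lemma recOrder_mapR (l : List (Fin (M+1))) : recOrder (mapR l) = l := by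
  induction l with
  | nil => rfl
  | cons m t ih =>
    rw [show mapR (m :: t) = (m, (2:Fin 3)) :: mapR t from rfl, recOrder,
      List.filter_cons_of_pos (by simp), List.map_cons]
    rw [recOrder] at ih
    rw [ih]

lemma recOrder_mapI (l : List (Fin (M+1))) : recOrder (mapI l) = [] := by
  induction l with
  | nil => rfl
  | cons m t ih =>
    rw [show mapI (m :: t) = (m, (1:Fin 3)) :: mapI t from rfl, recOrder,
      List.filter_cons_of_neg (by simp)]
    exact ih

lemma infOrder_cons02 (w : List (Ev (M+1))) :
    infOrder (((0:Fin (M+1)), (2:Fin 3)) :: w) = infOrder w := by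
  rw [infOrder, List.filter_cons_of_neg (by simp)]; rfl

lemma recOrder_cons02 (w : List (Ev (M+1))) :
    recOrder (((0:Fin (M+1)), (2:Fin 3)) :: w) = 0 :: recOrder w := by
  rw [recOrder, List.filter_cons_of_pos (by simp), List.map_cons]; rfl

lemma infNodes_injective : Function.Injective (infNodes (M := M)) := by
  intro σ τ h
  have := List.ofFn_injective h
  exact Equiv.ext fun i => Fin.succ_injective _ (congrFun this i)

lemma infOrder_Fword (σ τ : Equiv.Perm (Fin M)) (k : Fin (2*M+1)) :
    infOrder (Fword σ τ k) = infNodes σ := by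
  unfold Fword
  split_ifs with h1 h2
  · rw [infOrder_append, infOrder_mapI, infOrder_cons02, infOrder_append, infOrder_mapI,
      infOrder_mapR, List.append_nil, List.take_append_drop]
  · rw [infOrder_append, infOrder_mapI, infOrder_append, infOrder_mapR, infOrder_cons02,
      infOrder_mapR, List.nil_append, List.append_nil]
  · rw [infOrder_append, infOrder_mapI, infOrder_append, infOrder_mapR, infOrder_append,
      infOrder_mapI, infOrder_mapR, List.append_nil, List.nil_append, List.take_append_drop]

lemma recOrder_Fword1 (σ τ : Equiv.Perm (Fin M)) {c : ℕ} :
    recOrder (mapI ((infNodes σ).take c) ++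
      (0, 2) :: (mapI ((infNodes σ).drop c) ++ mapR (infNodes τ))) = 0 :: infNodes τ := by
  rw [recOrder_append, recOrder_mapI, recOrder_cons02, recOrder_append, recOrder_mapI,
    recOrder_mapR, List.nil_append, List.nil_append]

lemma recOrder_Fword2 (σ τ : Equiv.Perm (Fin M)) {c : ℕ} :
    recOrder (mapI (infNodes σ) ++ (mapR ((infNodes τ).take c) ++
      (0, 2) :: mapR ((infNodes τ).drop c))) =
      (infNodes τ).take c ++ 0 :: (infNodes τ).drop c := by
  rw [recOrder_append, recOrder_mapI, recOrder_append, recOrder_mapR, recOrder_cons02,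
    recOrder_mapR, List.nil_append]

lemma recOrder_Fword3 (σ τ : Equiv.Perm (Fin M)) :
    recOrder (mapI ((infNodes σ).take 1) ++ (mapR ((infNodes σ).take 1) ++
      (mapI ((infNodes σ).drop 1) ++ mapR (List.ofFn fun i => Mfun σ (τ i))))) =
      (infNodes σ).take 1 ++ List.ofFn (fun i => Mfun σ (τ i)) := by
  rw [recOrder_append, recOrder_mapI, recOrder_append, recOrder_mapR, recOrder_append,
    recOrder_mapI, recOrder_mapR, List.nil_append, List.nil_append]

lemma not_mem_mapI (l : List (Fin (M+1))) : ((0:Fin (M+1)), (2:Fin 3)) ∉ mapI l := by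
  intro h
  obtain ⟨m, hm, he⟩ := List.mem_map.mp h
  have h2 : (1 : Fin 3) = 2 := (Prod.ext_iff.mp he).2
  exact absurd h2 (by decide)

lemma not_mem_mapR {l : List (Fin (M+1))} (h0 : (0:Fin (M+1)) ∉ l) :
    ((0:Fin (M+1)), (2:Fin 3)) ∉ mapR l := by
  intro h
  obtain ⟨m, hm, he⟩ := List.mem_map.mp h
  have h1 : m = 0 := (Prod.ext_iff.mp he).1
  exact h0 (h1 ▸ hm)

lemma takeWhile_append_cons {α : Type*} (p : α → Bool) :
    ∀ (l₁ l₂ : List α) (a : α), (∀ x ∈ l₁, p x = true) → p a = false →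
      (l₁ ++ a :: l₂).takeWhile p = l₁ := by
  intro l₁
  induction l₁ with
  | nil =>
    intro l₂ a _ ha
    simp [List.takeWhile_cons, ha]
  | cons b t ih =>
    intro l₂ a h ha
    rw [List.cons_append, List.takeWhile_cons_of_pos (h b (List.mem_cons_self (a := b) (l := t))),
      ih _ _ (fun x hx => h x (List.mem_cons_of_mem _ hx)) ha]

lemma mapI_length (l : List (Fin (M+1))) : (mapI l).length = l.length := List.length_map ..
lemma mapR_length (l : List (Fin (M+1))) : (mapR l).length = l.length := List.length_map ..

/-- Position of the event `(0,2)` in a word. -/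
def pos0 (w : List (Ev (M+1))) : ℕ :=
  (w.takeWhile fun e => decide (e ≠ ((0:Fin (M+1)), (2:Fin 3)))).length

lemma mapI_ne02 {l : List (Fin (M+1))} {x : Ev (M+1)} (hx : x ∈ mapI l) :
    decide (x ≠ ((0:Fin (M+1)), (2:Fin 3))) = true := by
  obtain ⟨m, hm, rfl⟩ := List.mem_map.mp hx
  simp only [decide_eq_true_eq, ne_eq, Prod.mk.injEq, not_and]
  intro _ h2
  exact absurd h2 (by decide)

lemma mapR_ne02 {l : List (Fin (M+1))} (h0 : (0:Fin (M+1)) ∉ l) {x : Ev (M+1)}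
    (hx : x ∈ mapR l) : decide (x ≠ ((0:Fin (M+1)), (2:Fin 3))) = true := by
  obtain ⟨m, hm, rfl⟩ := List.mem_map.mp hx
  simp only [decide_eq_true_eq, ne_eq, Prod.mk.injEq, not_and]
  intro h1
  exact absurd (h1 ▸ hm) h0

lemma pos0_Fword1 (σ τ : Equiv.Perm (Fin M)) {c : ℕ} (hc : c ≤ M) :
    pos0 (mapI ((infNodes σ).take c) ++
      (0, 2) :: (mapI ((infNodes σ).drop c) ++ mapR (infNodes τ))) = c := by
  rw [pos0, takeWhile_append_cons _ _ _ _ (fun x hx => mapI_ne02 hx) (by simp),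
    mapI_length, List.length_take, length_infNodes, Nat.min_eq_left hc]

lemma pos0_Fword2 (σ τ : Equiv.Perm (Fin M)) {c : ℕ} (hc : c ≤ M) :
    pos0 (mapI (infNodes σ) ++ (mapR ((infNodes τ).take c) ++
      (0, 2) :: mapR ((infNodes τ).drop c))) = M + c := by
  rw [pos0, ← List.append_assoc,
    takeWhile_append_cons _ _ _ _ (fun x hx => by
      rcases List.mem_append.mp hx with h | h
      · exact mapI_ne02 h
      · refine mapR_ne02 ?_ h
        intro h0
        exact (mem_infNodes.mp (List.mem_of_mem_take h0)) rfl) (by simp),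
    List.length_append, mapI_length, mapR_length, length_infNodes, List.length_take,
    length_infNodes, Nat.min_eq_left hc]


lemma O1_Fword (hM : 1 ≤ M) (σ τ : Equiv.Perm (Fin M)) (k : Fin (2*M+1)) :
    (recOrder (Fword σ τ k)).head? = some 0 ↔ (k : ℕ) < M := by
  obtain ⟨M', rfl⟩ : ∃ M', M = M' + 1 := ⟨M - 1, (Nat.succ_pred_eq_of_pos hM).symm⟩
  unfold Fword
  split_ifs with h1 h2
  · rw [recOrder_Fword1]
    simp [h1]
  · rw [recOrder_Fword2]
    have hsplit : infNodes τ = (τ 0).succ :: (List.ofFn fun i : Fin M' => (τ i.succ).succ) := by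
      rw [infNodes, List.ofFn_succ]
    rw [hsplit, List.take_succ_cons, List.cons_append, List.head?_cons]
    simp only [h1, iff_false]
    intro h
    exact Fin.succ_ne_zero (τ 0) (by injection h)
  · rw [recOrder_Fword3]
    have hsplit : infNodes σ = (σ 0).succ :: (List.ofFn fun i : Fin M' => (σ i.succ).succ) := by
      rw [infNodes, List.ofFn_succ]
    rw [hsplit, List.take_succ_cons, List.take_zero, List.cons_append, List.head?_cons]
    simp only [h1, iff_false]
    intro h
    exact Fin.succ_ne_zero (σ 0) (by injection h)

lemma O2_Fword (hM : 2 ≤ M) (σ τ : Equiv.Perm (Fin M)) (k : Fin (2*M+1)) (hk : M ≤ (k : ℕ)) :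
    Option.map Prod.snd ((Fword σ τ k).drop 1).head? = some 2 ↔ 2*M ≤ (k : ℕ) := by
  obtain ⟨M'', rfl⟩ : ∃ M'', M = M'' + 2 := ⟨M - 2, by omega⟩
  unfold Fword
  split_ifs with h1 h2
  · omega
  · have hsplit : infNodes σ = (σ 0).succ ::
        ((σ (Fin.succ 0)).succ :: (List.ofFn fun i : Fin M'' => (σ i.succ.succ).succ)) := by
      rw [infNodes, List.ofFn_succ, List.ofFn_succ]
    rw [hsplit]
    rw [show mapI ((σ 0).succ :: ((σ (Fin.succ 0)).succ ::
        (List.ofFn fun i : Fin M'' => (σ i.succ.succ).succ))) =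
      ((σ 0).succ, (1:Fin 3)) :: (((σ (Fin.succ 0)).succ, (1:Fin 3)) ::
        mapI (List.ofFn fun i : Fin M'' => (σ i.succ.succ).succ)) from rfl]
    rw [List.cons_append, List.drop_one, List.tail_cons, List.cons_append, List.head?_cons]
    simp only [Option.map_some, iff_false, not_le.mpr h2]
    intro h
    have h12 : (1 : Fin 3) = 2 := by injection h
    exact absurd h12 (by decide)
  · have hsplit : infNodes σ = (σ 0).succ ::
        ((σ (Fin.succ 0)).succ :: (List.ofFn fun i : Fin M'' => (σ i.succ.succ).succ)) := by
      rw [infNodes, List.ofFn_succ, List.ofFn_succ]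
    rw [hsplit, List.take_succ_cons, List.take_zero]
    rw [show mapI [(σ 0).succ] = [((σ 0).succ, (1:Fin 3))] from rfl,
      show mapR [(σ 0).succ] = [((σ 0).succ, (2:Fin 3))] from rfl]
    rw [List.cons_append, List.nil_append, List.drop_one, List.tail_cons, List.cons_append,
      List.head?_cons]
    simp only [Option.map_some, iff_true, show 2*(M''+2) ≤ (k:ℕ) by omega]

lemma Fword_inj (hM : 2 ≤ M) {σ τ σ' τ' : Equiv.Perm (Fin M)} {k k' : Fin (2*M+1)}
    (heq : Fword σ τ k = Fword σ' τ' k') : σ = σ' ∧ τ = τ' ∧ k = k' := by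
  have hM1 : 1 ≤ M := by omega
  obtain rfl : σ = σ' :=
    infNodes_injective (by rw [← infOrder_Fword σ τ k, heq, infOrder_Fword])
  have hO1 := O1_Fword hM1 σ τ k
  have hO1' := O1_Fword hM1 σ τ' k'
  rw [heq] at hO1
  have hcase1 : ((k:ℕ) < M ↔ (k':ℕ) < M) := by rw [← hO1, hO1']
  by_cases h1 : (k:ℕ) < M
  · -- both in case 1
    have h1' : (k':ℕ) < M := hcase1.mp h1
    have hp : pos0 (Fword σ τ k) = (k:ℕ) + 1 := by
      unfold Fword; rw [if_pos h1]; exact pos0_Fword1 σ τ (by omega)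
    have hp' : pos0 (Fword σ τ' k') = (k':ℕ) + 1 := by
      unfold Fword; rw [if_pos h1']; exact pos0_Fword1 σ τ' (by omega)
    rw [heq] at hp
    have hk : k = k' := Fin.ext (by omega)
    have hr : recOrder (Fword σ τ k) = 0 :: infNodes τ := by
      unfold Fword; rw [if_pos h1]; exact recOrder_Fword1 σ τ
    have hr' : recOrder (Fword σ τ' k') = 0 :: infNodes τ' := by
      unfold Fword; rw [if_pos h1']; exact recOrder_Fword1 σ τ'
    rw [heq, hr'] at hr
    have hτ : τ = τ' := infNodes_injective (by injection hr.symm)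
    exact ⟨rfl, hτ, hk⟩
  · have h1' : ¬ (k':ℕ) < M := fun h => h1 (hcase1.mpr h)
    have hO2 := O2_Fword hM σ τ k (not_lt.mp h1)
    have hO2' := O2_Fword hM σ τ' k' (not_lt.mp h1')
    rw [heq] at hO2
    have hcase2 : (2*M ≤ (k:ℕ) ↔ 2*M ≤ (k':ℕ)) := by rw [← hO2, hO2']
    by_cases h2 : (k:ℕ) < 2*M
    · -- both in case 2
      have h2' : (k':ℕ) < 2*M := by
        by_contra h
        exact absurd (hcase2.mpr (not_lt.mp h)) (not_le.mpr h2)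
      have hp : pos0 (Fword σ τ k) = M + ((k:ℕ) - M + 1) := by
        unfold Fword; rw [if_neg h1, if_pos h2]; exact pos0_Fword2 σ τ (by omega)
      have hp' : pos0 (Fword σ τ' k') = M + ((k':ℕ) - M + 1) := by
        unfold Fword; rw [if_neg h1', if_pos h2']; exact pos0_Fword2 σ τ' (by omega)
      rw [heq] at hp
      have hk : k = k' := Fin.ext (by omega)
      have hcc : (k:ℕ) - M + 1 = (k':ℕ) - M + 1 := by omega
      have hr : recOrder (Fword σ τ k) =
          (infNodes τ).take ((k:ℕ) - M + 1) ++ 0 :: (infNodes τ).drop ((k:ℕ) - M + 1) := by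
        unfold Fword; rw [if_neg h1, if_pos h2]; exact recOrder_Fword2 σ τ
      have hr' : recOrder (Fword σ τ' k') =
          (infNodes τ').take ((k':ℕ) - M + 1) ++ 0 :: (infNodes τ').drop ((k':ℕ) - M + 1) := by
        unfold Fword; rw [if_neg h1', if_pos h2']; exact recOrder_Fword2 σ τ'
      rw [heq, hr'] at hr
      rw [← hcc] at hr
      have hlen : ((infNodes τ').take ((k:ℕ) - M + 1)).length =
          ((infNodes τ).take ((k:ℕ) - M + 1)).length := by
        rw [List.length_take, List.length_take, length_infNodes, length_infNodes]
      obtain ⟨hta, htb⟩ := List.append_inj hr hlen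
      have hdr : (infNodes τ').drop ((k:ℕ) - M + 1) = (infNodes τ).drop ((k:ℕ) - M + 1) := by
        injection htb
      have hinf : infNodes τ' = infNodes τ := by
        rw [← List.take_append_drop ((k:ℕ) - M + 1) (infNodes τ'),
          ← List.take_append_drop ((k:ℕ) - M + 1) (infNodes τ), hta, hdr]
      exact ⟨rfl, (infNodes_injective hinf).symm, hk⟩
    · -- both in case 3
      have h2' : ¬ (k':ℕ) < 2*M := fun h =>
        absurd (hcase2.mp (not_lt.mp h2)) (not_le.mpr h)
      have hk : k = k' := Fin.ext (by have := k.isLt; have := k'.isLt; omega)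
      have hr : recOrder (Fword σ τ k) =
          (infNodes σ).take 1 ++ List.ofFn (fun i => Mfun σ (τ i)) := by
        unfold Fword; rw [if_neg h1, if_neg h2]; exact recOrder_Fword3 σ τ
      have hr' : recOrder (Fword σ τ' k') =
          (infNodes σ).take 1 ++ List.ofFn (fun i => Mfun σ (τ' i)) := by
        unfold Fword; rw [if_neg h1', if_neg h2']; exact recOrder_Fword3 σ τ'
      rw [heq, hr'] at hr
      have hof := List.append_cancel_left hr.symm
      have hfun := List.ofFn_injective hof
      have hτ : τ = τ' := Equiv.ext fun i => Mfun_injective σ (congrFun hfun i)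
      exact ⟨rfl, hτ, hk⟩


end SIR0

/-- For the complete graph on `N ≥ 3` nodes, the number `P` of SIR
paths from the configuration with node 0 infected and all others susceptible to
the all-recovered configuration satisfies
`(N−1)!·N! < (2N−1)·((N−1)!)² ≤ P` and `2^(N−1)·P < (2N−1)!`. -/
theorem stmt0 (N : ℕ) (hN : 3 ≤ N)
    (A : Fin N → Fin N → Prop) (hA : ∀ j m : Fin N, A j m ↔ j ≠ m)
    (P : ℕ)
    (hP : P = numSIRPaths A (fun k => if (k : ℕ) = 0 then 1 else 0) (fun _ => 2)) :
    Nat.factorial (N - 1) * Nat.factorial N < (2 * N - 1) * (Nat.factorial (N - 1)) ^ 2 ∧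
    (2 * N - 1) * (Nat.factorial (N - 1)) ^ 2 ≤ P ∧
    2 ^ (N - 1) * P < Nat.factorial (2 * N - 1) := by
  classical
  obtain ⟨M, rfl⟩ : ∃ M, N = M + 1 := ⟨N - 1, by omega⟩
  have hM : 2 ≤ M := by omega
  have hM1 : 1 ≤ M := by omega
  -- the set of valid full words
  set Wfin : Finset (List (SIR0.Ev (M+1))) :=
    ((SIR0.E0 M).permutations.toFinset.filter (SIR0.FullWord M)) with hWfin
  have hWmem : ∀ w, w ∈ Wfin ↔ SIR0.FullWord M w := by
    intro w
    rw [hWfin, Finset.mem_filter]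
    exact ⟨And.right, fun h =>
      ⟨List.mem_toFinset.mpr (List.mem_permutations.mpr h.perm_E0), h⟩⟩
  -- P equals the number of valid full words
  have hPW : P = Wfin.card := by
    rw [hP, numSIRPaths]
    have hset : {L | IsSIRPath A (SIR0.x0 M) (fun _ => 2) L} =
        SIR0.run (SIR0.x0 M) '' (Wfin : Set (List (SIR0.Ev (M+1)))) := by
      ext L
      constructor
      · intro hL
        obtain ⟨w, hv, hrun, happ⟩ := SIR0.exists_word hL
        exact ⟨w, (hWmem w).mpr ⟨hv, happ⟩, hrun⟩
      · rintro ⟨w, hw, rfl⟩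
        obtain ⟨hv, happ⟩ := (hWmem w).mp hw
        have := SIR0.isSIRPath_run hA hv
        rwa [happ] at this
    have hinjon : Set.InjOn (SIR0.run (SIR0.x0 M)) (Wfin : Set (List (SIR0.Ev (M+1)))) :=
      fun w hw w' hw' h => SIR0.run_injOn ((hWmem w).mp (Finset.mem_coe.mp hw)).1
        ((hWmem w').mp (Finset.mem_coe.mp hw')).1 h
    rw [show (fun k : Fin (M+1) => if (k : ℕ) = 0 then (1 : Fin 3) else 0) = SIR0.x0 M
      from rfl, hset, Set.ncard_image_of_injOn hinjon, Set.ncard_coe_finset]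
  -- lower bound
  have hlow : (2*M+1) * (Nat.factorial M * Nat.factorial M) ≤ Wfin.card := by
    have hinj := Finset.card_le_card_of_injOn
      (s := (Finset.univ : Finset (Equiv.Perm (Fin M) × Equiv.Perm (Fin M) × Fin (2*M+1))))
      (fun p => SIR0.Fword p.1 p.2.1 p.2.2)
      (fun p _ => (hWmem _).mpr (SIR0.fullWord_Fword hM1 p.1 p.2.1 p.2.2))
      (fun p _ q _ h => by
        obtain ⟨h1, h2, h3⟩ := SIR0.Fword_inj hM h
        exact Prod.ext_iff.mpr ⟨h1, Prod.ext_iff.mpr ⟨h2, h3⟩⟩)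
    simp only [Finset.card_univ, Fintype.card_prod, Fintype.card_perm, Fintype.card_fin] at hinj
    calc (2*M+1) * (Nat.factorial M * Nat.factorial M)
        = Nat.factorial M * (Nat.factorial M * (2*M+1)) := by ring
      _ ≤ Wfin.card := hinj
  -- upper bound
  have hup : Wfin.card * 2 ^ M < Nat.factorial (2 * M + 1) :=
    SIR0.card_upper hM1 Wfin hWmem
  -- arithmetic
  have e1 : M + 1 - 1 = M := by omega
  have e2 : 2 * (M + 1) - 1 = 2 * M + 1 := by omega
  rw [e1, e2, hPW]
  refine ⟨?_, ?_, ?_⟩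
  · rw [Nat.factorial_succ]
    have hfp : 0 < Nat.factorial M * Nat.factorial M := by positivity
    calc Nat.factorial M * ((M+1) * Nat.factorial M)
        = (M+1) * (Nat.factorial M * Nat.factorial M) := by ring
      _ < (2*M+1) * (Nat.factorial M * Nat.factorial M) :=
          Nat.mul_lt_mul_of_lt_of_le (by omega) le_rfl hfp
      _ = (2*M+1) * Nat.factorial M ^ 2 := by ring
  · calc (2*M+1) * Nat.factorial M ^ 2
        = (2*M+1) * (Nat.factorial M * Nat.factorial M) := by ring
      _ ≤ Wfin.card := hlow
  · calc 2 ^ M * Wfin.card = Wfin.card * 2 ^ M := by ring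
      _ < Nat.factorial (2 * M + 1) := hup
end

section
/- Let N ≥ 1. For the complete graph on N nodes (adjacency A j m holds iff j ≠ m), the number of SIR paths from the configuration in which node 0 is infected and all other nodes are susceptible to the all-infected configuration equals exactly (N−1)!. -/
section Aux

variable {M : ℕ} (A : Fin (M+1) → Fin (M+1) → Prop)

/-- indicator configuration of a set of infected nodes -/
def sirInd (s : Finset (Fin (M+1))) : Fin (M+1) → Fin 3 :=
  fun k => if k ∈ s then 1 else 0

/-- infect node m -/
def sirU (c : Fin (M+1) → Fin 3) (m : Fin (M+1)) : Fin (M+1) → Fin 3 :=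
  Function.update c m 1

lemma sirU_ind (s : Finset (Fin (M+1))) (m : Fin (M+1)) :
    sirU (sirInd s) m = sirInd (insert m s) := by
  funext k
  by_cases hk : k = m
  · subst hk; simp [sirU, sirInd]
  · simp [sirU, sirInd, Function.update_of_ne hk, Finset.mem_insert, hk]

lemma sir_persist {x y : Fin (M+1) → Fin 3} (h : SIRTrans A x y) (i : Fin (M+1))
    (hx : x i = 2) : y i = 2 := by
  rcases h with ⟨m, h0, h1, _, hoth⟩ | ⟨m, h0, h1, hoth⟩
  · by_cases him : i = m
    · subst him; rw [h0] at hx; exact absurd hx (by decide)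
    · rw [hoth i him]; exact hx
  · by_cases him : i = m
    · subst him; rw [h0] at hx; exact absurd hx (by decide)
    · rw [hoth i him]; exact hx

lemma sir_last_two : ∀ (L : List (Fin (M+1) → Fin 3)) (c : Fin (M+1) → Fin 3)
    (i : Fin (M+1)), List.Chain' (SIRTrans A) (c :: L) → c i = 2 →
    ((c :: L).getLast (List.cons_ne_nil _ _)) i = 2 := by
  intro L
  induction L with
  | nil => intro c i _ hc; simpa using hc
  | cons c' L' ih =>
    intro c i hch hc
    simp only [List.Chain', List.isChain_cons_cons] at hch
    have h2 : c' i = 2 := sir_persist A hch.1 i hc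
    have := ih c' i hch.2 h2
    simpa using this

lemma scanl_head {α β : Type*} (f : β → α → β) (b : β) (l : List α) :
    (List.scanl f b l).head? = some b := by
  cases l <;> simp [List.scanl]

lemma sir_forward (hA : ∀ j m : Fin (M+1), A j m ↔ j ≠ m) :
    ∀ (l : List (Fin (M+1))) (s : Finset (Fin (M+1))), l.Nodup →
    (∀ m ∈ l, m ∉ s) → (0 : Fin (M+1)) ∈ s → (∀ k, k ∈ s ∨ k ∈ l) →
    (List.scanl sirU (sirInd s) l) ≠ [] ∧
    (List.scanl sirU (sirInd s) l).head? = some (sirInd s) ∧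
    (List.scanl sirU (sirInd s) l).getLast? = some (fun _ => 1) ∧
    (List.scanl sirU (sirInd s) l).Chain' (SIRTrans A) := by
  intro l
  induction l with
  | nil =>
    intro s _ _ h0 hcov
    have hs : sirInd s = (fun _ => (1 : Fin 3)) := by
      funext k
      rcases hcov k with h | h
      · simp [sirInd, h]
      · simp at h
    simp [List.scanl, hs, List.Chain', List.isChain_singleton]
  | cons m t ih =>
    intro s hnd hfresh h0 hcov
    have hms : m ∉ s := hfresh m (by simp)
    have hm0 : m ≠ 0 := fun h => hms (h ▸ h0)
    have step : SIRTrans A (sirInd s) (sirInd (insert m s)) := by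
      left
      refine ⟨m, ?_, ?_, ⟨0, (hA 0 m).mpr (Ne.symm hm0), ?_⟩, ?_⟩
      · simp [sirInd, hms]
      · simp [sirInd]
      · simp [sirInd, h0]
      · intro i him; simp [sirInd, Finset.mem_insert, him]
    have ih' := ih (insert m s)
      (List.nodup_cons.mp hnd).2
      (fun a ha => by
        simp only [Finset.mem_insert, not_or]
        exact ⟨fun h => (List.nodup_cons.mp hnd).1 (h ▸ ha), hfresh a (List.mem_cons_of_mem _ ha)⟩)
      (Finset.mem_insert_of_mem h0)
      (fun k => by
        rcases hcov k with h | h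
        · exact Or.inl (Finset.mem_insert_of_mem h)
        · rcases List.mem_cons.mp h with h | h
          · exact Or.inl (h ▸ Finset.mem_insert_self m s)
          · exact Or.inr h)
    rw [List.scanl_cons, sirU_ind]
    refine ⟨List.cons_ne_nil _ _, by simp, ?_, ?_⟩
    · have hPne : List.scanl sirU (sirInd (insert m s)) t ≠ [] := by
        intro h; have := congrArg List.length h; simp [List.length_scanl] at this
      obtain ⟨b, lb, hP⟩ := List.exists_cons_of_ne_nil hPne
      have hL := ih'.2.2.1
      rw [hP] at hL
      rw [hP, List.getLast?_cons_cons]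
      exact hL
    · simp only [List.Chain', List.isChain_cons]
      refine ⟨?_, ih'.2.2.2⟩
      intro b hb
      rw [scanl_head] at hb
      simp at hb
      rw [← hb]
      exact step

lemma sir_backward :
    ∀ (L : List (Fin (M+1) → Fin 3)) (s : Finset (Fin (M+1))),
    (0 : Fin (M+1)) ∈ s → L.Chain' (SIRTrans A) → L.head? = some (sirInd s) →
    L.getLast? = some (fun _ => 1) →
    ∃ l : List (Fin (M+1)), l.Nodup ∧ (∀ m ∈ l, m ∉ s) ∧ (∀ k, k ∈ s ∨ k ∈ l) ∧
      L = List.scanl sirU (sirInd s) l := by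
  intro L
  induction L with
  | nil => intro s _ _ hh _; simp at hh
  | cons c rest ih =>
    intro s h0 hch hh hl
    have hc : c = sirInd s := by simpa using hh
    subst hc
    cases rest with
    | nil =>
      have hall : sirInd s = (fun _ => (1 : Fin 3)) := by simpa using hl
      have hsu : ∀ k, k ∈ s := by
        intro k
        by_contra hk
        have := congrFun hall k
        simp [sirInd, hk] at this
      exact ⟨[], by simp, by simp, fun k => Or.inl (hsu k), by simp [List.scanl]⟩
    | cons c' rest' =>
      simp only [List.Chain', List.isChain_cons_cons] at hch
      rcases hch.1 with ⟨m, hm0, hm1, _, hoth⟩ | ⟨m, hm0, hm1, hoth⟩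
      · -- infection
        have hms : m ∉ s := by
          intro h; simp [sirInd, h] at hm0
        have hc' : c' = sirInd (insert m s) := by
          funext k
          by_cases hk : k = m
          · subst hk; simp [sirInd, hm1]
          · rw [hoth k hk]; simp [sirInd, Finset.mem_insert, hk]
        have ih' := ih (insert m s) (Finset.mem_insert_of_mem h0) hch.2
          (by rw [← hc']; simp)
          (by rw [← hl, List.getLast?_cons_cons])
        rcases ih' with ⟨t, hnd, hfr, hcov, heq⟩
        refine ⟨m :: t, ?_, ?_, ?_, ?_⟩
        · rw [List.nodup_cons]
          exact ⟨fun h => (hfr m h) (Finset.mem_insert_self m s), hnd⟩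
        · intro a ha
          rcases List.mem_cons.mp ha with h | h
          · exact h ▸ hms
          · exact fun hs => (hfr a h) (Finset.mem_insert_of_mem hs)
        · intro k
          rcases hcov k with h | h
          · rcases Finset.mem_insert.mp h with h | h
            · exact Or.inr (h ▸ List.mem_cons_self (a := m) (l := t))
            · exact Or.inl h
          · exact Or.inr (List.mem_cons_of_mem _ h)
        · rw [List.scanl_cons, sirU_ind, ← heq]
      · -- recovery: impossible
        exfalso
        have h2 : c' m = 2 := hm1
        have hlast := sir_last_two A rest' c' m hch.2 h2
        have : (fun _ => (1:Fin 3)) = (c' :: rest').getLast (List.cons_ne_nil _ _) := by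
          have := hl
          rw [List.getLast?_cons_cons] at this
          rw [List.getLast?_eq_getLast (List.cons_ne_nil _ _)] at this
          exact (Option.some_injective _ this).symm
        rw [← this] at hlast
        simp at hlast

lemma sir_inj :
    ∀ (l l' : List (Fin (M+1))) (s : Finset (Fin (M+1))), l.Nodup → l'.Nodup →
    (∀ m ∈ l, m ∉ s) → (∀ m ∈ l', m ∉ s) →
    List.scanl sirU (sirInd s) l = List.scanl sirU (sirInd s) l' → l = l' := by
  intro l
  induction l with
  | nil =>
    intro l' s _ _ _ _ h
    cases l' with
    | nil => rfl
    | cons a t =>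
      have := congrArg List.length h
      simp [List.length_scanl] at this
  | cons a t ih =>
    intro l' s hnd hnd' hfr hfr' h
    cases l' with
    | nil =>
      have := congrArg List.length h
      simp [List.length_scanl] at this
    | cons a' t' =>
      rw [List.scanl_cons, List.scanl_cons] at h
      have htail : List.scanl sirU (sirU (sirInd s) a) t =
          List.scanl sirU (sirU (sirInd s) a') t' := by
        simpa using h
      have hhead : sirU (sirInd s) a = sirU (sirInd s) a' := by
        have := congrArg List.head? htail
        rw [scanl_head, scanl_head] at this
        simpa using this
      have haa : a = a' := by
        rw [sirU_ind, sirU_ind] at hhead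
        have := congrFun hhead a
        simp [sirInd] at this
        by_contra hne
        have has : a ∉ s := hfr a (by simp)
        simp [Finset.mem_insert, hne, has] at this
      subst haa
      have : t = t' := by
        apply ih t' (insert a s) (List.nodup_cons.mp hnd).2 (List.nodup_cons.mp hnd').2
        · intro m hm
          simp only [Finset.mem_insert, not_or]
          exact ⟨fun h' => (List.nodup_cons.mp hnd).1 (h' ▸ hm),
            hfr m (List.mem_cons_of_mem _ hm)⟩
        · intro m hm
          simp only [Finset.mem_insert, not_or]
          exact ⟨fun h' => (List.nodup_cons.mp hnd').1 (h' ▸ hm),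
            hfr' m (List.mem_cons_of_mem _ hm)⟩
        · rw [← sirU_ind]; exact htail
      rw [this]

end Aux

lemma sir_count (M : ℕ) :
    Set.ncard {l : List (Fin (M+1)) | l.Nodup ∧ ∀ k, k ∈ l ↔ k ≠ 0} =
      Nat.factorial M := by
  set l₀ : List (Fin (M+1)) := (List.finRange M).map Fin.succ with hl₀
  have hnd₀ : l₀.Nodup := (List.nodup_finRange M).map (Fin.succ_injective M)
  have hmem₀ : ∀ k : Fin (M+1), k ∈ l₀ ↔ k ≠ 0 := by
    intro k
    rw [hl₀, List.mem_map]
    constructor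
    · rintro ⟨i, _, rfl⟩; exact Fin.succ_ne_zero i
    · intro hk
      obtain ⟨i, rfl⟩ := Fin.exists_succ_eq.mpr hk
      exact ⟨i, List.mem_finRange i, rfl⟩
  have hset : {l : List (Fin (M+1)) | l.Nodup ∧ ∀ k, k ∈ l ↔ k ≠ 0} =
      {l | l.Perm l₀} := by
    ext l
    simp only [Set.mem_setOf_eq]
    constructor
    · rintro ⟨hnd, hm⟩
      rw [List.perm_ext_iff_of_nodup hnd hnd₀]
      intro k; rw [hm k, hmem₀ k]
    · intro hp
      refine ⟨hp.nodup_iff.mpr hnd₀, fun k => ?_⟩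
      rw [hp.mem_iff, hmem₀ k]
  rw [hset]
  have hset2 : {l : List (Fin (M+1)) | l.Perm l₀} = ↑(l₀.permutations.toFinset) := by
    ext l
    simp [List.mem_permutations]
  rw [hset2, Set.ncard_coe_finset, List.toFinset_card_of_nodup (List.nodup_permutations _ hnd₀),
    List.length_permutations]
  simp [hl₀]


/-- for the complete graph on `N ≥ 1` nodes, the number of SIR
paths from the configuration with node 0 infected and all others susceptible to
the all-infected configuration equals `(N−1)!`. -/
theorem stmt4 (N : ℕ) (hN : 1 ≤ N) (A : Fin N → Fin N → Prop)
    (hA : ∀ j m : Fin N, A j m ↔ j ≠ m) :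
    numSIRPaths A (fun k => if (k : ℕ) = 0 then 1 else 0) (fun _ => 1) =
      Nat.factorial (N - 1) := by
  unfold numSIRPaths
  cases N with
  | zero => exact absurd hN (by omega)
  | succ M =>
    have hx0 : (fun k : Fin (M+1) => if (k : ℕ) = 0 then (1 : Fin 3) else 0) =
        sirInd ({0} : Finset (Fin (M+1))) := by
      funext k
      simp only [sirInd, Finset.mem_singleton, Fin.ext_iff, Fin.val_zero]
    have himg : {L : List (Fin (M+1) → Fin 3) |
        IsSIRPath A (fun k => if (k : ℕ) = 0 then 1 else 0) (fun _ => 1) L} =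
        (fun l => List.scanl sirU (sirInd ({0} : Finset (Fin (M+1)))) l) ''
          {l : List (Fin (M+1)) | l.Nodup ∧ ∀ k, k ∈ l ↔ k ≠ 0} := by
      ext L
      simp only [Set.mem_setOf_eq, Set.mem_image, IsSIRPath]
      constructor
      · rintro ⟨_, hh, hl, hch⟩
        rw [hx0] at hh
        obtain ⟨l, hnd, hfr, hcov, rfl⟩ := sir_backward A L {0} (by simp) hch hh hl
        refine ⟨l, ⟨hnd, fun k => ⟨fun hk => ?_, fun hk => ?_⟩⟩, rfl⟩
        · intro h0
          exact (hfr k hk) (by simp [h0])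
        · rcases hcov k with h | h
          · simp at h; exact absurd h hk
          · exact h
      · rintro ⟨l, ⟨hnd, hmem⟩, rfl⟩
        have := sir_forward A hA l {0} hnd
          (fun m hm => by simp [(hmem m).mp hm])
          (by simp)
          (fun k => by
            by_cases hk : k = 0
            · exact Or.inl (by simp [hk])
            · exact Or.inr ((hmem k).mpr hk))
        rw [hx0]
        exact this
    rw [himg, Set.ncard_image_of_injOn, sir_count]
    · simp
    · intro l hl l' hl' h
      exact sir_inj l l' {0} hl.1 hl'.1
        (fun m hm => by simp [(hl.2 m).mp hm])
        (fun m hm => by simp [(hl'.2 m).mp hm]) h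
end

section
/- Let N ≥ 1 and consider the complete graph on N nodes (adjacency A j m holds iff j ≠ m). For natural numbers k, l with k + l ≤ N, let P(k,l) denote the total number of SIR paths from the configuration in which node 0 is infected and all others are susceptible to configurations having exactly k infected nodes and exactly l recovered nodes (summed over all such end configurations). Then P(1,0) = 1; for every k with 2 ≤ k ≤ N, P(k,0) = (N − k + 1)·P(k−1, 0); for every l ≥ 1 with 1 + l ≤ N, P(1,l) = 2·P(2, l−1); and for all k ≥ 2, l ≥ 1 with k + l ≤ N, P(k,l) = (N − k − l + 1)·P(k−1, l) + (k+1)·P(k+1, l−1), where P(k+1, l−1) is interpreted as 0 if k + 1 + (l − 1) > N. -/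
/-- The total number of SIR paths from `x0` to configurations with exactly `k`
infected nodes and exactly `l` recovered nodes. -/
noncomputable def totalSIRPaths {N : ℕ} (A : Fin N → Fin N → Prop)
    (x0 : Fin N → Fin 3) (k l : ℕ) : ℕ :=
  ∑ y ∈ Finset.univ.filter (fun y : Fin N → Fin 3 =>
      (Finset.univ.filter fun i : Fin N => y i = 1).card = k ∧
      (Finset.univ.filter fun i : Fin N => y i = 2).card = l),
    numSIRPaths A x0 y

section SIRAux
open Finset

open Finset

variable {N : ℕ} {A : Fin N → Fin N → Prop}

def sval {N : ℕ} (x : Fin N → Fin 3) : ℕ := ∑ i, (x i : ℕ)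

lemma trans_sum {x y : Fin N → Fin 3} (h : SIRTrans A x y) : sval y = sval x + 1 := by
  unfold sval
  obtain ⟨m, hxm, hym, -, hupd⟩ | ⟨m, hxm, hym, hupd⟩ := h <;>
  · rw [← Finset.sum_erase_add _ _ (Finset.mem_univ m),
        ← Finset.sum_erase_add _ (fun i => ((x i : ℕ))) (Finset.mem_univ m),
        Finset.sum_congr rfl (fun i hi => by
          rw [hupd i (Finset.ne_of_mem_erase hi)]),
        hxm, hym]
    omega

lemma path_length_sum : ∀ (L : List (Fin N → Fin 3)) (x y : Fin N → Fin 3),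
    IsSIRPath A x y L → sval x + L.length = sval y + 1 := by
  intro L
  induction L with
  | nil => intro x y h; exact absurd rfl h.1
  | cons a t ih =>
    intro x y h
    obtain ⟨-, hh, hl, hc⟩ := h
    simp only [List.head?_cons, Option.some_inj] at hh
    subst hh
    cases t with
    | nil =>
      simp only [List.getLast?_singleton, Option.some_inj] at hl
      subst hl; simp
    | cons b t' =>
      unfold List.Chain' at hc; rw [List.isChain_cons_cons] at hc
      have := ih b y ⟨List.cons_ne_nil _ _, rfl, by
        rw [← hl]; exact List.getLast?_cons_cons.symm, hc.2⟩
      have h2 := trans_sum hc.1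
      simp only [List.length_cons] at *
      omega

lemma paths_finite (x y : Fin N → Fin 3) :
    {L : List (Fin N → Fin 3) | IsSIRPath A x y L}.Finite := by
  apply Set.Finite.subset (List.finite_length_le (Fin N → Fin 3) (sval y + 1))
  intro L hL
  have := path_length_sum L x y hL
  simp only [Set.mem_setOf_eq]
  omega

lemma np_self (x : Fin N → Fin 3) : numSIRPaths A x x = 1 := by
  unfold numSIRPaths
  convert Set.ncard_singleton [x]
  ext L
  simp only [Set.mem_setOf_eq, Set.mem_singleton_iff]
  constructor
  · rintro ⟨hne, hh, hl, hc⟩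
    have hlen := path_length_sum L x x ⟨hne, hh, hl, hc⟩
    have : L.length = 1 := by omega
    obtain ⟨a, rfl⟩ := List.length_eq_one_iff.mp this
    simp only [List.head?_cons, Option.some_inj] at hh
    rw [hh]
  · rintro rfl
    exact ⟨List.cons_ne_nil _ _, rfl, rfl, List.isChain_singleton _⟩

lemma np_zero {x y : Fin N → Fin 3} (hne : y ≠ x) (hs : sval y ≤ sval x) :
    numSIRPaths A x y = 0 := by
  unfold numSIRPaths
  rw [show {L : List (Fin N → Fin 3) | IsSIRPath A x y L} = ∅ from ?_, Set.ncard_empty]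
  ext L
  simp only [Set.mem_setOf_eq, Set.mem_empty_iff_false, iff_false]
  rintro ⟨hne', hh, hl, hc⟩
  have hlen := path_length_sum L x y ⟨hne', hh, hl, hc⟩
  have h1 : L.length = 1 := by have := List.length_pos_iff.mpr hne'; omega
  obtain ⟨a, rfl⟩ := List.length_eq_one_iff.mp h1
  simp only [List.head?_cons, List.getLast?_singleton, Option.some_inj] at hh hl
  subst hh; exact hne hl.symm

open Finset
variable {N : ℕ} {A : Fin N → Fin N → Prop}
lemma path_decomp {x0 y : Fin N → Fin 3} (hne : y ≠ x0) (L : List (Fin N → Fin 3)) :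
    IsSIRPath A x0 y L ↔
      ∃ z, SIRTrans A z y ∧ ∃ M, IsSIRPath A x0 z M ∧ L = M ++ [y] := by
  constructor
  · rintro ⟨hne', hh, hl, hc⟩
    have hLM : L.dropLast ++ [y] = L := List.dropLast_append_getLast? y hl
    set M := L.dropLast with hM
    have hMne : M ≠ [] := by
      intro h
      rw [h, List.nil_append] at hLM
      rw [← hLM] at hh
      simp only [List.head?_cons, Option.some_inj] at hh
      exact hne hh
    unfold List.Chain' at hc; rw [← hLM, List.isChain_append] at hc
    obtain ⟨hcM, -, hlast⟩ := hc
    refine ⟨M.getLast hMne,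
      hlast _ (by simp [List.getLast?_eq_getLast hMne]) y rfl,
      M, ⟨hMne, ?_, List.getLast?_eq_getLast hMne, hcM⟩, hLM.symm⟩
    rw [← hLM, List.head?_append_of_ne_nil _ hMne] at hh
    exact hh
  · rintro ⟨z, htr, M, ⟨hMne, hh, hl, hc⟩, rfl⟩
    refine ⟨by simp, ?_, ?_, ?_⟩
    · rw [List.head?_append_of_ne_nil _ hMne]; exact hh
    · exact List.getLast?_concat
    · unfold List.Chain'; rw [List.isChain_append]
      refine ⟨hc, List.isChain_singleton _, ?_⟩
      intro a ha b hb
      simp only [List.head?_cons, Option.mem_def, Option.some_inj] at hb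
      rw [Option.mem_def, hl, Option.some_inj] at ha
      subst ha; subst hb; exact htr

open scoped Classical in
lemma np_step {x0 y : Fin N → Fin 3} (hne : y ≠ x0) :
    numSIRPaths A x0 y =
      ∑ z : Fin N → Fin 3, if SIRTrans A z y then numSIRPaths A x0 z else 0 := by
  classical
  have key : (paths_finite (A := A) x0 y).toFinset =
      (univ.filter fun z => SIRTrans A z y).biUnion
        (fun z => ((paths_finite (A := A) x0 z).toFinset).image (· ++ [y])) := by
    ext L
    simp only [Set.Finite.mem_toFinset, Set.mem_setOf_eq, mem_biUnion, mem_filter,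
      mem_univ, true_and, mem_image, path_decomp hne]
    constructor
    · rintro ⟨z, htr, M, hM, rfl⟩; exact ⟨z, htr, M, hM, rfl⟩
    · rintro ⟨z, htr, M, hM, rfl⟩; exact ⟨z, htr, M, hM, rfl⟩
  rw [numSIRPaths, Set.ncard_eq_toFinset_card _ (paths_finite x0 y), key, Finset.card_biUnion]
  · rw [Finset.sum_filter]
    refine Finset.sum_congr rfl fun z _ => ?_
    split
    · rw [Finset.card_image_of_injective _ (List.append_left_injective [y]),
        numSIRPaths, Set.ncard_eq_toFinset_card _ (paths_finite x0 z)]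
    · rfl
  · intro z1 h1 z2 h2 hne12
    simp only [Finset.disjoint_left, mem_image, Set.Finite.mem_toFinset, Set.mem_setOf_eq]
    rintro L ⟨M1, hM1, rfl⟩ ⟨M2, hM2, heq⟩
    have : M2 = M1 := List.append_left_injective [y] heq
    subst this
    obtain ⟨-, -, hl1, -⟩ := hM1
    obtain ⟨-, -, hl2, -⟩ := hM2
    rw [hl1, Option.some_inj] at hl2
    exact hne12 hl2

open Finset Function
variable {N : ℕ} {A : Fin N → Fin N → Prop}
def icard {N : ℕ} (z : Fin N → Fin 3) : ℕ := (univ.filter fun i => z i = 1).card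
def rcard {N : ℕ} (z : Fin N → Fin 3) : ℕ := (univ.filter fun i => z i = 2).card
def scard {N : ℕ} (z : Fin N → Fin 3) : ℕ := (univ.filter fun i => z i = 0).card

lemma tri_card (z : Fin N → Fin 3) : scard z + icard z + rcard z = N := by
  have h3 : ∀ v : Fin 3, v = 0 ∨ v = 1 ∨ v = 2 := by decide
  have hu : (univ : Finset (Fin N)) =
      (univ.filter fun i => z i = 0) ∪ ((univ.filter fun i => z i = 1) ∪
        (univ.filter fun i => z i = 2)) := by
    ext i
    simp only [mem_univ, mem_union, mem_filter, true_and, true_iff]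
    exact h3 (z i)
  have hd1 : Disjoint (univ.filter fun i => z i = 1) (univ.filter fun i => z i = 2) := by
    simp only [Finset.disjoint_left, mem_filter]
    rintro i ⟨-, h1⟩ ⟨-, h2⟩; rw [h1] at h2; exact absurd h2 (by decide)
  have hd0 : Disjoint (univ.filter fun i => z i = 0)
      ((univ.filter fun i => z i = 1) ∪ (univ.filter fun i => z i = 2)) := by
    simp only [Finset.disjoint_left, mem_union, mem_filter]
    rintro i ⟨-, h0⟩ (⟨-, h1⟩ | ⟨-, h1⟩) <;> rw [h0] at h1 <;> exact absurd h1 (by decide)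
  have := congrArg Finset.card hu
  rw [Finset.card_union_of_disjoint hd0, Finset.card_union_of_disjoint hd1,
    Finset.card_univ, Fintype.card_fin] at this
  unfold scard icard rcard
  omega

lemma filter_update (z : Fin N → Fin 3) (m : Fin N) (c v : Fin 3) :
    univ.filter (fun i => Function.update z m c i = v) =
      if c = v then insert m (univ.filter fun i => z i = v)
      else (univ.filter fun i => z i = v).erase m := by
  ext i
  by_cases him : i = m <;> by_cases hcv : c = v <;>
    simp [Function.update_apply, him, hcv]

lemma icard_update1 (z : Fin N → Fin 3) (m : Fin N) (h : z m = 0) :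
    icard (Function.update z m 1) = icard z + 1 := by
  unfold icard
  rw [filter_update, if_pos rfl, Finset.card_insert_of_notMem (by simp [h])]

lemma rcard_update1 (z : Fin N → Fin 3) (m : Fin N) (h : z m = 0) :
    rcard (Function.update z m 1) = rcard z := by
  unfold rcard
  rw [filter_update, if_neg (by decide), Finset.erase_eq_of_notMem (by simp [h])]

lemma icard_update2 (z : Fin N → Fin 3) (m : Fin N) (h : z m = 1) :
    icard (Function.update z m 2) = icard z - 1 ∧ 1 ≤ icard z := by
  unfold icard
  have hm : m ∈ univ.filter fun i => z i = 1 := by simp [h]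
  constructor
  · rw [filter_update, if_neg (by decide), Finset.card_erase_of_mem hm]
  · exact Finset.card_pos.mpr ⟨m, hm⟩

lemma rcard_update2 (z : Fin N → Fin 3) (m : Fin N) (h : z m = 1) :
    rcard (Function.update z m 2) = rcard z + 1 := by
  unfold rcard
  rw [filter_update, if_pos rfl, Finset.card_insert_of_notMem (by simp [h])]

lemma trans_iff (hA : ∀ j m : Fin N, A j m ↔ j ≠ m) (z y : Fin N → Fin 3) :
    SIRTrans A z y ↔
      ((1 ≤ icard z) ∧ ∃ m, z m = 0 ∧ y = Function.update z m 1) ∨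
      (∃ m, z m = 1 ∧ y = Function.update z m 2) := by
  constructor
  · rintro (⟨m, hm0, hm1, ⟨j, -, hj⟩, hupd⟩ | ⟨m, hm1, hm2, hupd⟩)
    · refine Or.inl ⟨Finset.card_pos.mpr ⟨j, by simp [hj]⟩, m, hm0, funext fun i => ?_⟩
      by_cases him : i = m
      · subst him; rw [hm1, Function.update_self]
      · rw [hupd i him, Function.update_of_ne him]
    · refine Or.inr ⟨m, hm1, funext fun i => ?_⟩
      by_cases him : i = m
      · subst him; rw [hm2, Function.update_self]
      · rw [hupd i him, Function.update_of_ne him]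
  · rintro (⟨hpos, m, hm0, rfl⟩ | ⟨m, hm1, rfl⟩)
    · obtain ⟨j, hj⟩ := Finset.card_pos.mp hpos
      simp only [mem_filter, mem_univ, true_and] at hj
      refine Or.inl ⟨m, hm0, Function.update_self _ _ _, ⟨j, (hA j m).mpr ?_, hj⟩,
        fun i hi => Function.update_of_ne hi _ _⟩
      rintro rfl; rw [hm0] at hj; exact absurd hj (by decide)
    · exact Or.inr ⟨m, hm1, Function.update_self _ _ _,
        fun i hi => Function.update_of_ne hi _ _⟩

lemma update_inj (z : Fin N → Fin 3) (c : Fin 3) :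
    Set.InjOn (fun m => Function.update z m c) {m : Fin N | z m ≠ c} := by
  intro m1 h1 m2 h2 heq
  by_contra hne
  have := congrFun heq m1
  simp only [Function.update_self, Function.update_of_ne hne] at this
  exact h1 this.symm

open scoped Classical in
lemma succ_count (hA : ∀ j m : Fin N, A j m ↔ j ≠ m) (z : Fin N → Fin 3) (k l : ℕ) :
    ((univ.filter (fun y : Fin N → Fin 3 =>
        (univ.filter fun i => y i = 1).card = k ∧
        (univ.filter fun i => y i = 2).card = l)).filter
      (fun y => SIRTrans A z y)).card =
    (if icard z + 1 = k ∧ rcard z = l ∧ 1 ≤ icard z then N - icard z - rcard z else 0) +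
    (if icard z = k + 1 ∧ rcard z + 1 = l then icard z else 0) := by
  have hF : ((univ.filter (fun y : Fin N → Fin 3 =>
        (univ.filter fun i => y i = 1).card = k ∧
        (univ.filter fun i => y i = 2).card = l)).filter
      (fun y => SIRTrans A z y)) =
      (if icard z + 1 = k ∧ rcard z = l ∧ 1 ≤ icard z then
        (univ.filter fun m => z m = 0).image (fun m => Function.update z m 1) else ∅) ∪
      (if icard z = k + 1 ∧ rcard z + 1 = l then
        (univ.filter fun m => z m = 1).image (fun m => Function.update z m 2) else ∅) := by
    ext y
    simp only [mem_filter, mem_univ, true_and, mem_union, trans_iff hA]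
    constructor
    · rintro ⟨⟨hk, hl⟩, ⟨hpos, m, hm0, rfl⟩ | ⟨m, hm1, rfl⟩⟩
      · left
        rw [if_pos]
        · exact mem_image.mpr ⟨m, by simp [hm0], rfl⟩
        · refine ⟨?_, ?_, hpos⟩
          · rw [← hk]; exact (icard_update1 z m hm0).symm
          · rw [← hl]; exact (rcard_update1 z m hm0).symm
      · right
        rw [if_pos]
        · exact mem_image.mpr ⟨m, by simp [hm1], rfl⟩
        · obtain ⟨hi, hge⟩ := icard_update2 z m hm1
          have hr := rcard_update2 z m hm1
          have hk' : icard (Function.update z m 2) = k := hk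
          have hl' : rcard (Function.update z m 2) = l := hl
          omega
    · rintro (hmem | hmem)
      · split at hmem
        · next hc =>
          obtain ⟨m, hm, rfl⟩ := mem_image.mp hmem
          simp only [mem_filter, mem_univ, true_and] at hm
          refine ⟨⟨?_, ?_⟩, Or.inl ⟨hc.2.2, m, hm, rfl⟩⟩
          · show icard (Function.update z m 1) = k
            rw [icard_update1 z m hm]; exact hc.1
          · show rcard (Function.update z m 1) = l
            rw [rcard_update1 z m hm]; exact hc.2.1
        · exact absurd hmem (Finset.notMem_empty y)
      · split at hmem
        · next hc =>
          obtain ⟨m, hm, rfl⟩ := mem_image.mp hmem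
          simp only [mem_filter, mem_univ, true_and] at hm
          refine ⟨⟨?_, ?_⟩, Or.inr ⟨m, hm, rfl⟩⟩
          · show icard (Function.update z m 2) = k
            rw [(icard_update2 z m hm).1]; omega
          · show rcard (Function.update z m 2) = l
            rw [rcard_update2 z m hm]; omega
        · exact absurd hmem (Finset.notMem_empty y)
  rw [hF, Finset.card_union_of_disjoint, ]
  · congr 1
    · split
      · rw [Finset.card_image_of_injOn (fun m1 h1 m2 h2 heq => by
          refine update_inj z 1 ?_ ?_ heq <;>
            simp only [Set.mem_setOf_eq] <;>
            [skip; skip] <;> simp_all [mem_filter])]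
        · have := tri_card z
          have : scard z = N - icard z - rcard z := by omega
          rw [← this]; rfl
      · rfl
    · split
      · rw [Finset.card_image_of_injOn (fun m1 h1 m2 h2 heq => by
          refine update_inj z 2 ?_ ?_ heq <;>
            simp only [Set.mem_setOf_eq] <;> simp_all [mem_filter])]
        rfl
      · rfl
  · -- disjointness
    simp only [Finset.disjoint_left]
    intro y h1 h2
    split at h1
    · split at h2
      · obtain ⟨m1, hm1, heq1⟩ := mem_image.mp h1
        obtain ⟨m2, hm2, heq2⟩ := mem_image.mp h2
        simp only [mem_filter, mem_univ, true_and] at hm1 hm2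
        have h12 : m1 ≠ m2 := by rintro rfl; rw [hm1] at hm2; exact absurd hm2 (by decide)
        have := congrFun (heq1.trans heq2.symm) m2
        rw [Function.update_of_ne (Ne.symm h12), Function.update_self, hm2] at this
        exact absurd this (by decide)
      · exact Finset.notMem_empty y h2
    · exact Finset.notMem_empty y h1

section Glue
open Finset
variable {N : ℕ} {A : Fin N → Fin N → Prop}

def sirconf0 (N : ℕ) : Fin N → Fin 3 := fun i => if (i : ℕ) = 0 then 1 else 0

lemma icard_x0 (hN : 1 ≤ N) : icard (sirconf0 N) = 1 := by
  unfold icard sirconf0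
  rw [show (univ.filter fun i : Fin N => (if (i : ℕ) = 0 then (1:Fin 3) else 0) = 1)
      = {⟨0, hN⟩} from ?_, Finset.card_singleton]
  ext i
  simp only [mem_filter, mem_univ, true_and, Finset.mem_singleton]
  constructor
  · intro h
    by_cases h0 : (i : ℕ) = 0
    · exact Fin.ext h0
    · rw [if_neg h0] at h; exact absurd h (by decide)
  · rintro rfl; simp

lemma rcard_x0 : rcard (sirconf0 N) = 0 := by
  unfold rcard sirconf0
  rw [Finset.card_eq_zero]
  ext i
  simp only [mem_filter, mem_univ, true_and, Finset.notMem_empty, iff_false]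
  split <;> decide

lemma sval_eq (z : Fin N → Fin 3) : sval z = icard z + 2 * rcard z := by
  unfold sval icard rcard
  rw [Finset.card_filter, Finset.card_filter, Finset.mul_sum, ← Finset.sum_add_distrib]
  refine Finset.sum_congr rfl fun i _ => ?_
  have : ∀ v : Fin 3, (v : ℕ) = (if v = 1 then 1 else 0) + 2 * (if v = 2 then 1 else 0) := by
    decide
  exact this (z i)

open scoped Classical in
lemma main_step (hN : 1 ≤ N) (hA : ∀ j m : Fin N, A j m ↔ j ≠ m) (k l : ℕ)
    (hkl : ¬(k = 1 ∧ l = 0)) :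
    totalSIRPaths A (sirconf0 N) k l =
      ∑ z : Fin N → Fin 3, numSIRPaths A (sirconf0 N) z *
        ((if icard z + 1 = k ∧ rcard z = l ∧ 1 ≤ icard z then N - icard z - rcard z else 0) +
         (if icard z = k + 1 ∧ rcard z + 1 = l then icard z else 0)) := by
  unfold totalSIRPaths
  rw [Finset.sum_congr rfl (fun y hy => np_step (x0 := sirconf0 N) (y := y) ?_)]
  · rw [Finset.sum_comm]
    refine Finset.sum_congr rfl fun z _ => ?_
    rw [← Finset.sum_filter, Finset.sum_const, smul_eq_mul, mul_comm,
      succ_count hA z k l]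
  · -- y ≠ sirconf0 N
    rintro rfl
    simp only [mem_filter, mem_univ, true_and] at hy
    have h1 : icard (sirconf0 N) = k := hy.1
    have h2 : rcard (sirconf0 N) = l := hy.2
    rw [icard_x0 hN] at h1
    rw [rcard_x0] at h2
    exact hkl ⟨h1.symm, h2.symm⟩

lemma total_eq (x0 : Fin N → Fin 3) (a b : ℕ) :
    totalSIRPaths A x0 a b =
      ∑ y ∈ Finset.univ.filter (fun y : Fin N → Fin 3 => icard y = a ∧ rcard y = b),
        numSIRPaths A x0 y := rfl

lemma sum_class (x0 : Fin N → Fin 3) (a b c : ℕ) :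
    (∑ z : Fin N → Fin 3, numSIRPaths A x0 z *
      (if icard z = a ∧ rcard z = b then c else 0)) =
    c * totalSIRPaths A x0 a b := by
  rw [total_eq, Finset.mul_sum, Finset.sum_filter]
  refine Finset.sum_congr rfl fun z _ => ?_
  by_cases h : icard z = a ∧ rcard z = b
  · rw [if_pos h, if_pos h, mul_comm]
  · rw [if_neg h, if_neg h, mul_zero]

end Glue
end SIRAux

/-- the recursion for the number of SIR paths on the complete
graph, starting from node 0 infected and all other nodes susceptible. -/
theorem stmt8 (N : ℕ) (hN : 1 ≤ N)
    (A : Fin N → Fin N → Prop) (hA : ∀ j m : Fin N, A j m ↔ j ≠ m)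
    (P : ℕ → ℕ → ℕ)
    (hP : ∀ k l : ℕ,
      P k l = totalSIRPaths A (fun i => if (i : ℕ) = 0 then 1 else 0) k l) :
    P 1 0 = 1 ∧
    (∀ k : ℕ, 2 ≤ k → k ≤ N → P k 0 = (N - k + 1) * P (k - 1) 0) ∧
    (∀ l : ℕ, 1 ≤ l → 1 + l ≤ N → P 1 l = 2 * P 2 (l - 1)) ∧
    (∀ k l : ℕ, 2 ≤ k → 1 ≤ l → k + l ≤ N →
      P k l = (N - k - l + 1) * P (k - 1) l + (k + 1) * P (k + 1) (l - 1)) := by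
  classical
  have hx0 : (fun i : Fin N => if (i : ℕ) = 0 then (1 : Fin 3) else 0) = sirconf0 N := rfl
  have hP' : ∀ k l : ℕ, P k l = totalSIRPaths A (sirconf0 N) k l := by
    intro k l; rw [hP k l, hx0]
  refine ⟨?_, ?_, ?_, ?_⟩
  · -- P 1 0 = 1
    rw [hP' 1 0, totalSIRPaths]
    rw [Finset.sum_eq_single_of_mem (sirconf0 N) ?_ ?_]
    · exact np_self (sirconf0 N)
    · simp only [Finset.mem_filter, Finset.mem_univ, true_and]
      exact ⟨icard_x0 hN, rcard_x0⟩
    · intro y hy hne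
      simp only [Finset.mem_filter, Finset.mem_univ, true_and] at hy
      refine np_zero hne ?_
      have h1 : icard y = 1 := hy.1
      have h2 : rcard y = 0 := hy.2
      rw [sval_eq, sval_eq, icard_x0 hN, rcard_x0, h1, h2]
  · -- k ≥ 2, l = 0
    intro k hk2 hkN
    rw [hP' k 0, main_step hN hA k 0 (by omega), hP' (k-1) 0]
    rw [show ((N - k + 1) * totalSIRPaths A (sirconf0 N) (k-1) 0) =
      ∑ z : Fin N → Fin 3, numSIRPaths A (sirconf0 N) z *
        (if icard z = k - 1 ∧ rcard z = 0 then N - k + 1 else 0) from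
        (sum_class (sirconf0 N) (k-1) 0 (N-k+1)).symm]
    refine Finset.sum_congr rfl fun z _ => ?_
    congr 1
    rw [if_neg (show ¬(icard z = k + 1 ∧ rcard z + 1 = 0) by omega), add_zero]
    by_cases h : icard z = k - 1 ∧ rcard z = 0
    · rw [if_pos (show icard z + 1 = k ∧ rcard z = 0 ∧ 1 ≤ icard z by omega), if_pos h]
      omega
    · rw [if_neg (show ¬(icard z + 1 = k ∧ rcard z = 0 ∧ 1 ≤ icard z) by omega), if_neg h]
  · -- k = 1, l ≥ 1
    intro l hl1 hlN
    rw [hP' 1 l, main_step hN hA 1 l (by omega), hP' 2 (l-1)]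
    rw [show (2 * totalSIRPaths A (sirconf0 N) 2 (l-1)) =
      ∑ z : Fin N → Fin 3, numSIRPaths A (sirconf0 N) z *
        (if icard z = 2 ∧ rcard z = l - 1 then 2 else 0) from
        (sum_class (sirconf0 N) 2 (l-1) 2).symm]
    refine Finset.sum_congr rfl fun z _ => ?_
    congr 1
    rw [if_neg (show ¬(icard z + 1 = 1 ∧ rcard z = l ∧ 1 ≤ icard z) by omega), zero_add]
    by_cases h : icard z = 2 ∧ rcard z = l - 1
    · rw [if_pos (show icard z = 1 + 1 ∧ rcard z + 1 = l by omega), if_pos h]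
      omega
    · rw [if_neg (show ¬(icard z = 1 + 1 ∧ rcard z + 1 = l) by omega), if_neg h]
  · -- k ≥ 2, l ≥ 1
    intro k l hk2 hl1 hklN
    rw [hP' k l, main_step hN hA k l (by omega), hP' (k-1) l, hP' (k+1) (l-1)]
    rw [show ((N - k - l + 1) * totalSIRPaths A (sirconf0 N) (k-1) l) =
      ∑ z : Fin N → Fin 3, numSIRPaths A (sirconf0 N) z *
        (if icard z = k - 1 ∧ rcard z = l then N - k - l + 1 else 0) from
        (sum_class (sirconf0 N) (k-1) l (N-k-l+1)).symm]
    rw [show ((k + 1) * totalSIRPaths A (sirconf0 N) (k+1) (l-1)) =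
      ∑ z : Fin N → Fin 3, numSIRPaths A (sirconf0 N) z *
        (if icard z = k + 1 ∧ rcard z = l - 1 then k + 1 else 0) from
        (sum_class (sirconf0 N) (k+1) (l-1) (k+1)).symm]
    rw [← Finset.sum_add_distrib]
    refine Finset.sum_congr rfl fun z _ => ?_
    rw [← mul_add]
    congr 1
    congr 1
    · by_cases h : icard z = k - 1 ∧ rcard z = l
      · rw [if_pos (show icard z + 1 = k ∧ rcard z = l ∧ 1 ≤ icard z by omega), if_pos h]
        omega
      · rw [if_neg (show ¬(icard z + 1 = k ∧ rcard z = l ∧ 1 ≤ icard z) by omega), if_neg h]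
    · by_cases h : icard z = k + 1 ∧ rcard z = l - 1
      · rw [if_pos (show icard z = k + 1 ∧ rcard z + 1 = l by omega), if_pos h]
        omega
      · rw [if_neg (show ¬(icard z = k + 1 ∧ rcard z + 1 = l) by omega), if_neg h]
end

section
/- Let N ≥ 1 and let b : Fin N → Fin N → ℝ be arbitrary weighted infection rates. Define the SI infinitesimal generator Q as the real matrix indexed by finite subsets S of Fin N with entries: Q S T = ∑_{k ∈ S} b k m if T = S ∪ {m} for some m ∉ S; Q S S = −∑_{m ∉ S} ∑_{k ∈ S} b k m; and Q S T = 0 otherwise. Then the characteristic polynomial of Q equals ∏_{S ⊆ Fin N} (X + cut(S)), where cut(S) = ∑_{k ∈ S} ∑_{l ∉ S} b k l. In particular, the eigenvalues of Q counted with algebraic multiplicity are exactly the numbers −cut(S) over all subsets S of Fin N. -/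
/-- The infinitesimal generator of the Markovian SI process with weighted
infection rates `b`, indexed by the set of infected nodes: the entry `Q S T`
equals `∑_{k ∈ S} b k m` if `T = S ∪ {m}` for some `m ∉ S` (equivalently,
`S ⊆ T` and `T \ S` is a singleton `{m}`), the diagonal entry is
`−∑_{m ∉ S} ∑_{k ∈ S} b k m`, and all other entries are `0`. -/
noncomputable def SIgen (N : ℕ) (b : Fin N → Fin N → ℝ) :
    Matrix (Finset (Fin N)) (Finset (Fin N)) ℝ := fun S T =>
  if T = S then -∑ m ∈ Sᶜ, ∑ k ∈ S, b k m
  else if S ⊆ T ∧ (T \ S).card = 1 then ∑ m ∈ T \ S, ∑ k ∈ S, b k m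
  else 0

/-- The weight of the S–I cut set of the configuration with infected set `S`. -/
noncomputable def SIcut (N : ℕ) (b : Fin N → Fin N → ℝ) (S : Finset (Fin N)) : ℝ :=
  ∑ k ∈ S, ∑ l ∈ Sᶜ, b k l

/-- the characteristic polynomial of the SI infinitesimal
generator equals `∏_{S ⊆ Fin N} (X + cut(S))`; in particular its eigenvalues,
with algebraic multiplicity, are the numbers `−cut(S)`. -/
theorem stmt9 (N : ℕ) (hN : 1 ≤ N) (b : Fin N → Fin N → ℝ) :
    (SIgen N b).charpoly =
      ∏ S : Finset (Fin N), (Polynomial.X + Polynomial.C (SIcut N b S)) := by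
  classical
  set f : Finset (Fin N) → ℕ := fun S => ∑ i ∈ S.image Fin.val, 2 ^ i with hf
  have hfinj : Function.Injective f := by
    intro S T h
    have := Finset.geomSum_injective (n := 2) le_rfl h
    exact Finset.image_injective Fin.val_injective this
  have hfmono : ∀ {S T : Finset (Fin N)}, S ⊆ T → f S ≤ f T := by
    intro S T hST
    exact Finset.sum_le_sum_of_subset (Finset.image_subset_image hST)
  have htri : (SIgen N b).BlockTriangular f := by
    intro S T h
    rw [SIgen, if_neg, if_neg]
    · rintro ⟨hsub, -⟩
      exact absurd (hfmono hsub) (not_le.2 h)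
    · rintro rfl
      exact lt_irrefl _ h
  rw [htri.charpoly, Finset.prod_image (fun S _ T _ h => hfinj h)]
  refine Finset.prod_congr rfl fun S _ => ?_
  haveI : Unique {T : Finset (Fin N) // f T = f S} :=
    ⟨⟨⟨S, rfl⟩⟩, by rintro ⟨T, hT⟩; exact Subtype.ext (hfinj hT)⟩
  have hdiag : SIgen N b S S = -(SIcut N b S) := by
    rw [SIgen, if_pos rfl, SIcut, Finset.sum_comm]
  have hd : ((default : {T : Finset (Fin N) // f T = f S}) : Finset (Fin N)) = S :=
    hfinj (default : {T : Finset (Fin N) // f T = f S}).2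
  rw [Matrix.charpoly, Matrix.det_unique]
  simp [Matrix.charmatrix_apply, Matrix.toSquareBlock_def, hd, hdiag, sub_neg_eq_add]
end

section
/- Let N ≥ 1 and β : ℝ. For the complete graph with homogeneous infection rate, i.e. b k l = β if k ≠ l and b k k = 0, the characteristic polynomial of the SI infinitesimal generator Q equals ∏_{k=0}^{N} (X + β·k·(N−k))^{C(N,k)}, where C(N,k) is the binomial coefficient. That is, the eigenvalue −β·k·(N−k) occurs with algebraic multiplicity C(N,k) for each 0 ≤ k ≤ N. -/
open Finset Polynomial in
/-- for the complete graph with homogeneous infection rate `β`,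
the characteristic polynomial of the SI generator is
`∏_{k=0}^{N} (X + β·k·(N−k))^{C(N,k)}`. -/
theorem stmt10 (N : ℕ) (hN : 1 ≤ N) (β : ℝ)
    (b : Fin N → Fin N → ℝ) (hb : ∀ k l : Fin N, b k l = if k ≠ l then β else 0) :
    (SIgen N b).charpoly =
      ∏ k ∈ Finset.range (N + 1),
        (Polynomial.X + Polynomial.C (β * (k : ℝ) * ((N - k : ℕ) : ℝ))) ^ N.choose k := by
  have hdiag : ∀ S : Finset (Fin N),
      SIgen N b S S = -(β * (S.card : ℝ) * ((N - S.card : ℕ) : ℝ)) := by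
    intro S
    have h1 : ∀ m ∈ Sᶜ, ∑ k ∈ S, b k m = β * S.card := by
      intro m hm
      rw [Finset.sum_congr rfl (fun k hk => ?_), Finset.sum_const, nsmul_eq_mul, mul_comm]
      rw [hb, if_pos]
      intro h
      exact absurd (h ▸ hk) (by simpa using hm)
    simp only [SIgen]
    rw [if_true, Finset.sum_congr rfl h1, Finset.sum_const, nsmul_eq_mul, card_compl]
    have hc : S.card ≤ N := by simpa using Finset.card_le_card (Finset.subset_univ S)
    rw [Fintype.card_fin]
    ring
  have key : (SIgen N b).charpoly = ∏ S : Finset (Fin N), (X - C (SIgen N b S S)) := by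
    letI : LinearOrder (Finset (Fin N)) :=
      LinearOrder.lift' toColex toColex.injective
    apply Matrix.charpoly_of_upperTriangular
    intro S T hlt
    simp only [id] at hlt
    have hne : T ≠ S := by
      intro h
      subst h
      exact lt_irrefl _ (show toColex T < toColex T from hlt)
    simp only [SIgen, if_neg hne, ite_eq_right_iff]
    rintro ⟨hsub, -⟩
    exact absurd hlt (not_lt.2 (Finset.Colex.toColex_le_toColex_of_subset hsub))
  rw [key]
  -- group by cardinality
  rw [← Finset.prod_fiberwise_of_maps_to (g := Finset.card)
    (fun S _ => Finset.mem_range.2 (Nat.lt_succ_of_le (by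
      simpa using Finset.card_le_card (Finset.subset_univ S))))]
  refine Finset.prod_congr rfl fun k hk => ?_
  have h2 : ∀ S ∈ Finset.univ.filter (fun S : Finset (Fin N) => S.card = k),
      (X - C (SIgen N b S S)) = X + C (β * (k : ℝ) * ((N - k : ℕ) : ℝ)) := by
    intro S hS
    rw [hdiag]
    simp only [Finset.mem_filter] at hS
    rw [hS.2, map_neg, sub_neg_eq_add]
  rw [Finset.prod_congr rfl h2, Finset.prod_const]
  congr 1
  have h3 : Finset.univ.filter (fun S : Finset (Fin N) => S.card = k)
      = Finset.powersetCard k Finset.univ := by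
    ext S; simp [Finset.mem_powersetCard_univ]
  rw [h3, Finset.card_powersetCard, Finset.card_univ, Fintype.card_fin]
end

section
/- Let N ≥ 2 and β : ℝ. For the star graph with hub node 0 and homogeneous infection rate, i.e. b k l = β if k ≠ l and (k = 0 or l = 0), and b k l = 0 otherwise, the characteristic polynomial of the SI infinitesimal generator Q equals ∏_{k=0}^{N−1} (X + β·k)^{2·C(N−1,k)}, where C(N−1,k) is the binomial coefficient. That is, the eigenvalue −β·k occurs with algebraic multiplicity 2·C(N−1,k) for each 0 ≤ k ≤ N−1. -/
open Finset Polynomial in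
/-- The charpoly of the SI generator is the product of `X + cut` over all subsets. -/
theorem SIgen_charpoly_aux (N : ℕ) (b : Fin N → Fin N → ℝ) :
    (SIgen N b).charpoly =
      ∏ S : Finset (Fin N), (X - C (SIgen N b S S)) := by
  classical
  let e : Finset (Fin N) ≃ Colex (Finset (Fin N)) :=
    ⟨toColex, ofColex, fun s => rfl, fun s => rfl⟩
  haveI : Fintype (Colex (Finset (Fin N))) := Fintype.ofEquiv _ e
  rw [Matrix.charpoly, ← Matrix.det_reindex_self e]
  have htri : ((Matrix.charmatrix (SIgen N b)).reindex e e).BlockTriangular id := by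
    intro a c hlt
    simp only [Matrix.reindex_apply, Matrix.submatrix_apply]
    set S := e.symm a with hS
    set T := e.symm c with hT
    have hto : toColex T < toColex S := by
      have : e T < e S := by
        rw [hS, hT, Equiv.apply_symm_apply, Equiv.apply_symm_apply]; exact hlt
      exact this
    have hne : S ≠ T := by
      intro h; rw [h] at hto; exact lt_irrefl _ hto
    rw [Matrix.charmatrix_apply_ne _ _ _ hne, neg_eq_zero]
    have hQ : SIgen N b S T = 0 := by
      rw [SIgen]
      rw [if_neg (fun h => hne h.symm), if_neg]
      rintro ⟨hsub, -⟩
      have : S ⊂ T := hsub.ssubset_of_ne hne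
      exact absurd (Finset.Colex.toColex_lt_toColex_of_ssubset this) (lt_asymm hto)
    rw [hQ, map_zero]
  rw [Matrix.det_of_upperTriangular htri]
  rw [← Equiv.prod_comp e fun a => ((Matrix.charmatrix (SIgen N b)).reindex e e) a a]
  apply Finset.prod_congr rfl
  intro S _
  simp only [Matrix.reindex_apply, Matrix.submatrix_apply, Equiv.symm_apply_apply]
  rw [Matrix.charmatrix_apply_eq]

/-- for the star graph with hub node 0 and homogeneous infection
rate `β`, the characteristic polynomial of the SI generator is
`∏_{k=0}^{N−1} (X + β·k)^{2·C(N−1,k)}`. -/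
theorem stmt11 (N : ℕ) (hN : 2 ≤ N) (β : ℝ)
    (b : Fin N → Fin N → ℝ)
    (hb : ∀ k l : Fin N,
      b k l = if k ≠ l ∧ ((k : ℕ) = 0 ∨ (l : ℕ) = 0) then β else 0) :
    (SIgen N b).charpoly =
      ∏ k ∈ Finset.range N,
        (Polynomial.X + Polynomial.C (β * (k : ℝ))) ^ (2 * (N - 1).choose k) := by
  classical
  open Finset Polynomial in
  have hNpos : 0 < N := by omega
  set z : Fin N := ⟨0, hNpos⟩ with hzdef
  have hzval : ∀ k : Fin N, (k : ℕ) = 0 ↔ k = z := by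
    intro k; constructor
    · intro h; exact Fin.ext h
    · rintro rfl; rfl
  -- diagonal entries
  have hdiag : ∀ S : Finset (Fin N), SIgen N b S S =
      -(β * (if z ∈ S then (Sᶜ.card : ℝ) else (S.card : ℝ))) := by
    intro S
    rw [SIgen]
    rw [if_pos rfl]
    congr 1
    by_cases h0 : z ∈ S
    · rw [if_pos h0]
      have key : ∀ m ∈ Sᶜ, ∑ k ∈ S, b k m = β := by
        intro m hm
        have hmS : m ∉ S := Finset.mem_compl.1 hm
        have hm0 : (m : ℕ) ≠ 0 := fun h => hmS ((hzval m).1 h ▸ h0)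
        rw [Finset.sum_eq_single z]
        · rw [hb]
          rw [if_pos ⟨fun h => hm0 (h ▸ (rfl : (z : ℕ) = 0)), Or.inl rfl⟩]
        · intro k hk hkz
          rw [hb, if_neg]
          rintro ⟨-, h | h⟩
          · exact hkz ((hzval k).1 h)
          · exact hm0 h
        · intro h; exact absurd h0 h
      rw [Finset.sum_congr rfl key, Finset.sum_const, nsmul_eq_mul, mul_comm]
    · rw [if_neg h0]
      have hz : z ∈ Sᶜ := Finset.mem_compl.2 h0
      rw [Finset.sum_eq_single z]
      · have key : ∀ k ∈ S, b k z = β := by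
          intro k hk
          rw [hb, if_pos]
          exact ⟨fun h => h0 (h ▸ hk), Or.inr rfl⟩
        rw [Finset.sum_congr rfl key, Finset.sum_const, nsmul_eq_mul, mul_comm]
      · intro m hm hmz
        apply Finset.sum_eq_zero
        intro k hk
        rw [hb, if_neg]
        rintro ⟨-, h | h⟩
        · exact h0 ((hzval k).1 h ▸ hk)
        · exact hmz ((hzval m).1 h)
      · intro h; exact absurd hz h
  rw [SIgen_charpoly_aux]
  have hterm : ∀ S : Finset (Fin N),
      X - C (SIgen N b S S) =
        X + C (β * (if z ∈ S then (Sᶜ.card : ℝ) else (S.card : ℝ))) := by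
    intro S; rw [hdiag, map_neg, sub_neg_eq_add]
  rw [Finset.prod_congr rfl fun S _ => hterm S]
  -- split over z ∈ S
  set g : ℕ → Polynomial ℝ := fun j => X + C (β * (j : ℝ)) with hg
  have hsplit := Finset.prod_filter_mul_prod_filter_not Finset.univ
    (fun S : Finset (Fin N) => z ∈ S)
    (fun S => X + C (β * (if z ∈ S then (Sᶜ.card : ℝ) else (S.card : ℝ))))
  rw [← hsplit]
  have hz1 : ∏ S ∈ Finset.univ.filter (fun S : Finset (Fin N) => z ∈ S),
      (X + C (β * (if z ∈ S then (Sᶜ.card : ℝ) else (S.card : ℝ)))) =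
      ∏ S ∈ Finset.univ.filter (fun S : Finset (Fin N) => ¬ z ∈ S), g S.card := by
    refine Finset.prod_bij' (fun S _ => Sᶜ) (fun T _ => Tᶜ) ?_ ?_ ?_ ?_ ?_
    · intro S hS
      simp only [Finset.mem_filter, Finset.mem_univ, true_and] at hS ⊢
      simp [hS]
    · intro T hT
      simp only [Finset.mem_filter, Finset.mem_univ, true_and] at hT ⊢
      simp [hT]
    · intro S _; exact compl_compl S
    · intro T _; exact compl_compl T
    · intro S hS
      simp only [Finset.mem_filter, Finset.mem_univ, true_and] at hS
      rw [if_pos hS]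
  have hpows : filter (fun S : Finset (Fin N) => ¬ z ∈ S) univ = ({z}ᶜ : Finset (Fin N)).powerset := by
    ext S
    simp only [Finset.mem_filter, Finset.mem_univ, true_and, Finset.mem_powerset]
    constructor
    · intro h x hx
      rw [Finset.mem_compl, Finset.mem_singleton]
      rintro rfl; exact h hx
    · intro h hz
      have := h hz
      rw [Finset.mem_compl, Finset.mem_singleton] at this
      exact this rfl
  have hcard : ({z}ᶜ : Finset (Fin N)).card = N - 1 := by
    rw [Finset.card_compl, Finset.card_singleton, Fintype.card_fin]
  have hz2 : ∏ S ∈ Finset.univ.filter (fun S : Finset (Fin N) => ¬ z ∈ S),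
      (X + C (β * (if z ∈ S then (Sᶜ.card : ℝ) else (S.card : ℝ)))) =
      ∏ S ∈ Finset.univ.filter (fun S : Finset (Fin N) => ¬ z ∈ S), g S.card := by
    apply Finset.prod_congr rfl
    intro S hS
    simp only [Finset.mem_filter, Finset.mem_univ, true_and] at hS
    rw [if_neg hS]
  rw [hz1, hz2, ← Finset.prod_mul_distrib]
  have hone : ∏ S ∈ Finset.univ.filter (fun S : Finset (Fin N) => ¬ z ∈ S),
      (g S.card * g S.card) =
      ∏ j ∈ Finset.range N, g j ^ (2 * (N-1).choose j) := by
    rw [hpows, Finset.prod_powerset]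
    rw [hcard]
    have : N - 1 + 1 = N := by omega
    rw [this]
    apply Finset.prod_congr rfl
    intro j _
    have := Finset.prod_powersetCard j ({z}ᶜ : Finset (Fin N)) (fun n => g n * g n)
    rw [this, hcard]
    rw [show g j * g j = g j ^ 2 by ring, ← pow_mul, mul_comm 2]
  rw [hone]
end

section
/- Let β, δ₁, δ₂ be positive reals with β ≠ δ₂ and β + δ₁ ≠ δ₂. Define the functions s₁, s₂, s₄, s₅, s₇, s₈ : ℝ → ℝ by s₁(t) = exp(−(β+δ₁)t); s₂(t) = (δ₁/(β+δ₁))·(1 − exp(−(β+δ₁)t)); s₄(t) = (β/(β−δ₂))·(exp(−(δ₁+δ₂)t) − exp(−(β+δ₁)t)); s₅(t) = (β/(β+δ₁−δ₂))·exp(−δ₂t) + (β/(δ₂−β))·exp(−(δ₁+δ₂)t) + (β·δ₁/((β−δ₂)(β+δ₁−δ₂)))·exp(−(β+δ₁)t); s₇(t) = exp(−δ₁t) + (β/(δ₂−β))·exp(−(δ₁+δ₂)t) + (δ₂/(β−δ₂))·exp(−(β+δ₁)t); s₈(t) = β/(β+δ₁) − exp(−δ₁t) − (β/(β+δ₁−δ₂))·exp(−δ₂t)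 + (β/(β−δ₂))·exp(−(δ₁+δ₂)t) + (δ₁/(β+δ₁) − δ₂/(β−δ₂) + (δ₂−δ₁)/(β+δ₁−δ₂))·exp(−(β+δ₁)t). Then s₁(0)=1 and s₂(0)=s₄(0)=s₅(0)=s₇(0)=s₈(0)=0, and for every real t the derivatives satisfy s₁' = −(β+δ₁)·s₁, s₂' = δ₁·s₁, s₄' = β·s₁ − (δ₁+δ₂)·s₄, s₅' = δ₁·s₄ − δ₂·s₅, s₇' = δ₂·s₄ − δ₁·s₇, and s₈' = δ₂·s₅ + δ₁·s₇. -/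
/-- Probability of the state (node 1 infected, node 2 susceptible). -/
noncomputable def sir1 (β δ₁ : ℝ) (t : ℝ) : ℝ := Real.exp (-(β + δ₁) * t)

/-- Probability of the state (node 1 recovered, node 2 susceptible). -/
noncomputable def sir2 (β δ₁ : ℝ) (t : ℝ) : ℝ :=
  (δ₁ / (β + δ₁)) * (1 - Real.exp (-(β + δ₁) * t))

/-- Probability of the state (both nodes infected). -/
noncomputable def sir4 (β δ₁ δ₂ : ℝ) (t : ℝ) : ℝ :=
  (β / (β - δ₂)) * (Real.exp (-(δ₁ + δ₂) * t) - Real.exp (-(β + δ₁) * t))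

/-- Probability of the state (node 1 recovered, node 2 infected). -/
noncomputable def sir5 (β δ₁ δ₂ : ℝ) (t : ℝ) : ℝ :=
  (β / (β + δ₁ - δ₂)) * Real.exp (-δ₂ * t) +
    (β / (δ₂ - β)) * Real.exp (-(δ₁ + δ₂) * t) +
    (β * δ₁ / ((β - δ₂) * (β + δ₁ - δ₂))) * Real.exp (-(β + δ₁) * t)

/-- Probability of the state (node 1 infected, node 2 recovered). -/
noncomputable def sir7 (β δ₁ δ₂ : ℝ) (t : ℝ) : ℝ :=
  Real.exp (-δ₁ * t) + (β / (δ₂ - β)) * Real.exp (-(δ₁ + δ₂) * t) +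
    (δ₂ / (β - δ₂)) * Real.exp (-(β + δ₁) * t)

/-- Probability of the state (both nodes recovered). -/
noncomputable def sir8 (β δ₁ δ₂ : ℝ) (t : ℝ) : ℝ :=
  β / (β + δ₁) - Real.exp (-δ₁ * t) -
    (β / (β + δ₁ - δ₂)) * Real.exp (-δ₂ * t) +
    (β / (β - δ₂)) * Real.exp (-(δ₁ + δ₂) * t) +
    (δ₁ / (β + δ₁) - δ₂ / (β - δ₂) + (δ₂ - δ₁) / (β + δ₁ - δ₂)) *
      Real.exp (-(β + δ₁) * t)


private lemma expD (c t : ℝ) :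
    HasDerivAt (fun s : ℝ => Real.exp (c * s)) (c * Real.exp (c * t)) t := by
  have h := (Real.hasDerivAt_exp (c * t)).comp t ((hasDerivAt_id t).const_mul c)
  exact h.congr_deriv (by ring)

/-- the displayed functions form the exact solution of the
Kolmogorov forward equations of the Markovian SIR process on two connected
nodes, with node 1 initially infected: they satisfy the initial conditions
`s₁(0) = 1`, `s₂(0) = s₄(0) = s₅(0) = s₇(0) = s₈(0) = 0` and the linear ODE
system `s₁' = −(β+δ₁)s₁`, `s₂' = δ₁s₁`, `s₄' = βs₁ − (δ₁+δ₂)s₄`,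
`s₅' = δ₁s₄ − δ₂s₅`, `s₇' = δ₂s₄ − δ₁s₇`, `s₈' = δ₂s₅ + δ₁s₇`. -/
theorem stmt18 (β δ₁ δ₂ : ℝ) (hβ : 0 < β) (hδ₁ : 0 < δ₁) (hδ₂ : 0 < δ₂)
    (hne1 : β ≠ δ₂) (hne2 : β + δ₁ ≠ δ₂) :
    sir1 β δ₁ 0 = 1 ∧ sir2 β δ₁ 0 = 0 ∧ sir4 β δ₁ δ₂ 0 = 0 ∧
    sir5 β δ₁ δ₂ 0 = 0 ∧ sir7 β δ₁ δ₂ 0 = 0 ∧ sir8 β δ₁ δ₂ 0 = 0 ∧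
    (∀ t : ℝ, HasDerivAt (sir1 β δ₁) (-(β + δ₁) * sir1 β δ₁ t) t) ∧
    (∀ t : ℝ, HasDerivAt (sir2 β δ₁) (δ₁ * sir1 β δ₁ t) t) ∧
    (∀ t : ℝ, HasDerivAt (sir4 β δ₁ δ₂)
      (β * sir1 β δ₁ t - (δ₁ + δ₂) * sir4 β δ₁ δ₂ t) t) ∧
    (∀ t : ℝ, HasDerivAt (sir5 β δ₁ δ₂)
      (δ₁ * sir4 β δ₁ δ₂ t - δ₂ * sir5 β δ₁ δ₂ t) t) ∧
    (∀ t : ℝ, HasDerivAt (sir7 β δ₁ δ₂)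
      (δ₂ * sir4 β δ₁ δ₂ t - δ₁ * sir7 β δ₁ δ₂ t) t) ∧
    (∀ t : ℝ, HasDerivAt (sir8 β δ₁ δ₂)
      (δ₂ * sir5 β δ₁ δ₂ t + δ₁ * sir7 β δ₁ δ₂ t) t) := by

  have h1 : β + δ₁ ≠ 0 := by positivity
  have h2 : β - δ₂ ≠ 0 := sub_ne_zero.mpr hne1
  have h3 : β + δ₁ - δ₂ ≠ 0 := sub_ne_zero.mpr hne2
  have h4 : δ₂ - β ≠ 0 := fun h => h2 (by linarith [sub_eq_zero.mp h])
  refine ⟨by simp [sir1], by simp [sir2], by simp [sir4], ?_, ?_, ?_, ?_, ?_, ?_, ?_, ?_, ?_⟩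
  · simp only [sir5, mul_zero, Real.exp_zero, mul_one]
    field_simp
    ring
  · simp only [sir7, mul_zero, Real.exp_zero, mul_one]
    field_simp
    ring
  · simp only [sir8, mul_zero, Real.exp_zero, mul_one]
    field_simp
    ring
  · intro t
    have := expD (-(β + δ₁)) t
    convert this using 1
    all_goals rfl
  · intro t
    have := ((expD (-(β + δ₁)) t).const_mul (δ₁ / (β + δ₁))).const_sub (δ₁ / (β + δ₁))
    have h : (fun s => δ₁ / (β + δ₁) - δ₁ / (β + δ₁) * Real.exp (-(β + δ₁) * s)) = sir2 β δ₁ := by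
      funext s; simp [sir2]; ring
    rw [h] at this
    refine this.congr_deriv ?_
    simp [sir1]
    field_simp
    ring
  · intro t
    have := ((expD (-(δ₁ + δ₂)) t).sub (expD (-(β + δ₁)) t)).const_mul (β / (β - δ₂))
    have h : (fun s => β / (β - δ₂) * (Real.exp (-(δ₁ + δ₂) * s) - Real.exp (-(β + δ₁) * s))) = sir4 β δ₁ δ₂ := by
      funext s; simp [sir4]
    simp only [Pi.add_def, Pi.sub_def, Pi.neg_def] at this
    rw [h] at this
    refine this.congr_deriv ?_
    simp [sir1, sir4]
    field_simp
    ring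
  · intro t
    have := (((expD (-δ₂) t).const_mul (β / (β + δ₁ - δ₂))).add
      ((expD (-(δ₁ + δ₂)) t).const_mul (β / (δ₂ - β)))).add
      ((expD (-(β + δ₁)) t).const_mul (β * δ₁ / ((β - δ₂) * (β + δ₁ - δ₂))))
    have h : (fun s => β / (β + δ₁ - δ₂) * Real.exp (-δ₂ * s) + β / (δ₂ - β) * Real.exp (-(δ₁ + δ₂) * s) + β * δ₁ / ((β - δ₂) * (β + δ₁ - δ₂)) * Real.exp (-(β + δ₁) * s)) = sir5 β δ₁ δ₂ := by
      funext s; simp [sir5]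
    simp only [Pi.add_def, Pi.sub_def, Pi.neg_def] at this
    rw [h] at this
    refine this.congr_deriv ?_
    simp [sir4, sir5]
    field_simp
    ring
  · intro t
    have := (((expD (-δ₁) t)).add
      ((expD (-(δ₁ + δ₂)) t).const_mul (β / (δ₂ - β)))).add
      ((expD (-(β + δ₁)) t).const_mul (δ₂ / (β - δ₂)))
    have h : (fun s => Real.exp (-δ₁ * s) + β / (δ₂ - β) * Real.exp (-(δ₁ + δ₂) * s) + δ₂ / (β - δ₂) * Real.exp (-(β + δ₁) * s)) = sir7 β δ₁ δ₂ := by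
      funext s; simp [sir7]
    simp only [Pi.add_def, Pi.sub_def, Pi.neg_def] at this
    rw [h] at this
    refine this.congr_deriv ?_
    simp [sir4, sir7]
    field_simp
    ring
  · intro t
    have := (((((expD (-δ₁) t).const_sub (β / (β + δ₁))).neg.const_sub 0).sub
      ((expD (-δ₂) t).const_mul (β / (β + δ₁ - δ₂)))).add
      ((expD (-(δ₁ + δ₂)) t).const_mul (β / (β - δ₂)))).add
      ((expD (-(β + δ₁)) t).const_mul (δ₁ / (β + δ₁) - δ₂ / (β - δ₂) + (δ₂ - δ₁) / (β + δ₁ - δ₂)))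
    have h : (fun s => 0 - -(β / (β + δ₁) - Real.exp (-δ₁ * s)) - β / (β + δ₁ - δ₂) * Real.exp (-δ₂ * s) + β / (β - δ₂) * Real.exp (-(δ₁ + δ₂) * s) + (δ₁ / (β + δ₁) - δ₂ / (β - δ₂) + (δ₂ - δ₁) / (β + δ₁ - δ₂)) * Real.exp (-(β + δ₁) * s)) = sir8 β δ₁ δ₂ := by
      funext s; simp [sir8]; try ring
    simp only [Pi.add_def, Pi.sub_def, Pi.neg_def] at this
    rw [h] at this
    refine this.congr_deriv ?_
    simp [sir5, sir7, sir8]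
    field_simp
    ring
end
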